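/- arXiv:2410.24130 — 5 statements merged into one kernel-verified Lean document; each statement's English description precedes it below -/
import Mathlib

section
/- For every graph G, r ∈ ℤ⁺, and proper edge-colouring c of G, the minimum size of an r-percolating set satisfies m_e(G,r) ≥ dim(W^r_{G,c}). -/
open Polynomial

namespace BondPerc

open Classical

set_option maxHeartbeats 1000000

/-- The set of edges eventually infected in `r`-bond bootstrap percolation on `G`
starting from the initially infected set `S`. -/
inductive Infected {V : Type*} (G : SimpleGraph V) (r : ℕ) (S : Set (Sym2 V)) : Sym2 V → Prop
  | init {e : Sym2 V} (he : e ∈ S) : Infected G r S e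
  | step {e : Sym2 V} (he : e ∈ G.edgeSet) (v : V) (hv : v ∈ e)
      (T : Finset (Sym2 V)) (hT : r ≤ T.card)
      (hT1 : ∀ f ∈ T, f ∈ G.edgeSet) (hT2 : ∀ f ∈ T, v ∈ f)
      (hT3 : ∀ f ∈ T, Infected G r S f) : Infected G r S e

/-- `S` percolates in `r`-bond bootstrap percolation on `G`. -/
def Percolates {V : Type*} (G : SimpleGraph V) (r : ℕ) (S : Set (Sym2 V)) : Prop :=
  S ⊆ G.edgeSet ∧ ∀ e ∈ G.edgeSet, Infected G r S e

/-- `m_e(G,r)`: the minimum size of an `r`-percolating set of edges of `G`. -/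
noncomputable def me {V : Type*} (G : SimpleGraph V) (r : ℕ) : ℕ :=
  sInf {n | ∃ S : Set (Sym2 V), S.Finite ∧ Percolates G r S ∧ S.ncard = n}

/-- `c` is a proper edge-colouring of `G`: edges sharing a vertex get distinct colours. -/
def IsProperEdgeColoring {V : Type*} (G : SimpleGraph V) (c : Sym2 V → ℝ) : Prop :=
  ∀ e ∈ G.edgeSet, ∀ f ∈ G.edgeSet, e ≠ f → (∃ v, v ∈ e ∧ v ∈ f) → c e ≠ c f

set_option maxHeartbeats 1000000 in
/-- The vector space `W^r_{G,c}` of tuples of polynomials `(p_v)` with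
`deg p_v ≤ min(r, deg v) - 1` and `p_u(c(uv)) = p_v(c(uv))` for every edge `uv`. -/
noncomputable def Wspace {V : Type*} [Fintype V] (G : SimpleGraph V) (r : ℕ)
    (c : Sym2 V → ℝ) : Submodule ℝ (V → Polynomial ℝ) where
  carrier := {p | (∀ v, (p v).degree < (min r (G.degree v) : ℕ)) ∧
    ∀ u v, G.Adj u v → (p u).eval (c s(u, v)) = (p v).eval (c s(u, v))}
  add_mem' := by
    rintro p q ⟨hp1, hp2⟩ ⟨hq1, hq2⟩
    refine ⟨fun v => lt_of_le_of_lt (degree_add_le _ _) (max_lt (hp1 v) (hq1 v)), ?_⟩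
    intro u v huv
    simp only [Pi.add_apply, eval_add, hp2 u v huv, hq2 u v huv]
  zero_mem' := by
    refine ⟨fun v => ?_, fun u v h => by simp⟩
    simp only [Pi.zero_apply, degree_zero]
    exact WithBot.bot_lt_coe _
  smul_mem' := by
    rintro a p ⟨hp1, hp2⟩
    refine ⟨fun v => lt_of_le_of_lt (degree_smul_le a (p v)) (hp1 v), ?_⟩
    intro u v huv
    simp only [Pi.smul_apply, Polynomial.eval_smul, hp2 u v huv]

/-- `dim W^r_{G,c}`. -/
noncomputable def Wdim {V : Type*} [Fintype V] (G : SimpleGraph V) (r : ℕ)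
    (c : Sym2 V → ℝ) : ℕ :=
  Module.finrank ℝ (Wspace G r c)

/-- `d^G_i`, the number of vertices of `G` of degree `i` (indexed by `ℤ`, zero for `i < 0`). -/
noncomputable def dcount {V : Type*} [Fintype V] (G : SimpleGraph V) (i : ℤ) : ℕ :=
  Nat.card {v : V // (G.degree v : ℤ) = i}

/-- The star `S_k` with centre `0` and `k` leaves. -/
def starGraph (k : ℕ) : SimpleGraph (Fin (k + 1)) :=
  SimpleGraph.fromRel fun i _ => i = 0

/-- The theta graph `H_{k,ℓ}`: two hub vertices joined by three internally disjoint
paths of lengths `1`, `ℓ - 1` and `k - 1`. -/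
def thetaGraph (k l : ℕ) : SimpleGraph (Fin 2 ⊕ Fin (l - 2) ⊕ Fin (k - 2)) :=
  SimpleGraph.fromRel fun x y =>
    (x = Sum.inl 0 ∧ y = Sum.inl 1) ∨
    (x = Sum.inl 0 ∧ ∃ j : Fin (l - 2), y = Sum.inr (Sum.inl j) ∧ j.val = 0) ∨
    (∃ i j : Fin (l - 2), x = Sum.inr (Sum.inl i) ∧ y = Sum.inr (Sum.inl j) ∧
      j.val = i.val + 1) ∨
    (∃ i : Fin (l - 2), x = Sum.inr (Sum.inl i) ∧ i.val = l - 3 ∧ y = Sum.inl 1) ∨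
    (x = Sum.inl 0 ∧ ∃ j : Fin (k - 2), y = Sum.inr (Sum.inr j) ∧ j.val = 0) ∨
    (∃ i j : Fin (k - 2), x = Sum.inr (Sum.inr i) ∧ y = Sum.inr (Sum.inr j) ∧
      j.val = i.val + 1) ∨
    (∃ i : Fin (k - 2), x = Sum.inr (Sum.inr i) ∧ i.val = k - 3 ∧ y = Sum.inl 1)


private lemma eval_eq_of_mem {V : Type*} [Fintype V] {G : SimpleGraph V} {r : ℕ}
    {c : Sym2 V → ℝ} {p : V → Polynomial ℝ} (hp : p ∈ Wspace G r c)
    {e : Sym2 V} (he : e ∈ G.edgeSet) {u v : V} (hu : u ∈ e) (hv : v ∈ e) :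
    (p u).eval (c e) = (p v).eval (c e) := by
  induction e using Sym2.ind with
  | _ a b =>
    rw [SimpleGraph.mem_edgeSet] at he
    rcases Sym2.mem_iff.mp hu with rfl | rfl <;> rcases Sym2.mem_iff.mp hv with rfl | rfl
    · rfl
    · exact hp.2 _ _ he
    · exact (hp.2 _ _ he).symm
    · rfl

private lemma infected_vanish {V : Type*} [Fintype V] {G : SimpleGraph V} {r : ℕ}
    {c : Sym2 V → ℝ} (hc : IsProperEdgeColoring G c) {S : Set (Sym2 V)}
    (hS : S ⊆ G.edgeSet) {p : V → Polynomial ℝ} (hp : p ∈ Wspace G r c)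
    (h0 : ∀ e ∈ S, ∀ v ∈ e, (p v).eval (c e) = 0) :
    ∀ e, Infected G r S e → ∀ v ∈ e, (p v).eval (c e) = 0 := by
  intro e hinf
  induction hinf with
  | init he => exact h0 _ he
  | @step e he v hv T hT hT1 hT2 hT3 ih =>
    intro w hw
    have hpv : p v = 0 := by
      by_cases hz : p v = 0
      · exact hz
      have hinj : Set.InjOn c (T : Set (Sym2 V)) := by
        intro f hf g hg hfg
        by_contra hne
        exact hc f (hT1 f hf) g (hT1 g hg) hne ⟨v, hT2 f hf, hT2 g hg⟩ hfg
      have hcard : r ≤ (T.image c).card := by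
        rwa [Finset.card_image_of_injOn hinj]
      refine Polynomial.eq_zero_of_natDegree_lt_card_of_eval_eq_zero' _ (T.image c) ?_ ?_
      · intro x hx
        obtain ⟨f, hf, rfl⟩ := Finset.mem_image.mp hx
        exact ih f hf v (hT2 f hf)
      · have hd : (p v).natDegree < min r (G.degree v) :=
          (Polynomial.natDegree_lt_iff_degree_lt hz).mpr (hp.1 v)
        exact lt_of_lt_of_le hd (le_trans (min_le_left _ _) hcard)
    rw [eval_eq_of_mem hp he hw hv, hpv, Polynomial.eval_zero]

set_option maxHeartbeats 1000000 in
/-- The Hambardzumyan–Hatami–Qian inequality: `m_e(G,r) ≥ dim W^r_{G,c}`. -/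
theorem me_ge_Wdim {V : Type*} [Fintype V] (G : SimpleGraph V) (r : ℕ) (hr : 1 ≤ r)
    (c : Sym2 V → ℝ) (hc : IsProperEdgeColoring G c) :
    Wdim G r c ≤ me G r := by
  classical
  have hne : {n | ∃ S : Set (Sym2 V), S.Finite ∧ Percolates G r S ∧ S.ncard = n}.Nonempty :=
    ⟨G.edgeSet.ncard, G.edgeSet, Set.toFinite _,
      ⟨subset_rfl, fun e he => Infected.init he⟩, rfl⟩
  obtain ⟨S, hSfin, hSperc, hScard⟩ := Nat.sInf_mem hne
  let T : Finset (Sym2 V) := hSfin.toFinset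
  let L : Wspace G r c →ₗ[ℝ] (T → ℝ) :=
    { toFun := fun p e => ((p : V → Polynomial ℝ) (Quot.out (e : Sym2 V)).1).eval (c e)
      map_add' := by intro p q; funext e; simp
      map_smul' := by intro a p; funext e; simp }
  have hLinj : Function.Injective L := by
    rw [← LinearMap.ker_eq_bot, LinearMap.ker_eq_bot']
    intro p hp0
    have h0 : ∀ e ∈ S, ∀ v ∈ e, ((p : V → Polynomial ℝ) v).eval (c e) = 0 := by
      intro e he v hv
      have h1 : ((p : V → Polynomial ℝ) (Quot.out e).1).eval (c e) = 0 :=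
        congrFun hp0 ⟨e, hSfin.mem_toFinset.mpr he⟩
      rw [eval_eq_of_mem p.2 (hSperc.1 he) hv (Sym2.out_fst_mem e)]
      exact h1
    have hvan := infected_vanish hc hSperc.1 p.2 h0
    ext v : 2
    show (p : V → Polynomial ℝ) v = (0 : Polynomial ℝ)
    by_cases hz : (p : V → Polynomial ℝ) v = 0
    · exact hz
    have hinj : Set.InjOn c (G.incidenceFinset v : Set (Sym2 V)) := by
      intro f hf g hg hfg
      rw [Finset.mem_coe, SimpleGraph.mem_incidenceFinset] at hf hg
      by_contra hne
      exact hc f hf.1 g hg.1 hne ⟨v, hf.2, hg.2⟩ hfg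
    refine Polynomial.eq_zero_of_natDegree_lt_card_of_eval_eq_zero' _
      ((G.incidenceFinset v).image c) ?_ ?_
    · intro x hx
      obtain ⟨f, hf, rfl⟩ := Finset.mem_image.mp hx
      rw [SimpleGraph.mem_incidenceFinset] at hf
      exact hvan f (hSperc.2 f hf.1) v hf.2
    · have hd : ((p : V → Polynomial ℝ) v).natDegree < min r (G.degree v) :=
        (Polynomial.natDegree_lt_iff_degree_lt hz).mpr (p.2.1 v)
      rw [Finset.card_image_of_injOn hinj, SimpleGraph.card_incidenceFinset_eq_degree]
      exact lt_of_lt_of_le hd (min_le_right _ _)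
  have hfin : Module.finrank ℝ (Wspace G r c) ≤ Module.finrank ℝ (T → ℝ) :=
    LinearMap.finrank_le_finrank_of_injective hLinj
  rw [Module.finrank_fintype_fun_eq_card, Fintype.card_coe] at hfin
  have hme : me G r = S.ncard := hScard.symm
  rw [Wdim, hme, Set.ncard_eq_toFinset_card S hSfin]
  exact hfin

end BondPerc
end

section
/- Upper bound for products with stars: for integers r, k ≥ 1 and any graph G, m_e(G□S_k, r) ≤ m_e(G,r) + k·m_e(G,r−1) + Σ_{t=1}^{k−1} t·d^G_{r−t} + k·Σ_{t=k}^{r} d^G_{r−t}, where d^G_i is the number of vertices of G of degree i and S_k is the star with k leaves. -/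
open Polynomial

namespace BondPerc

open Classical

set_option maxHeartbeats 1000000

section Aux

open Finset

/-- Transfer lemma: an infection derivation in `G` at threshold `r'` transfers along an
injective graph map `L` into `P` at threshold `r`, provided each vertex `v` has a reservoir
`extra v` of already-infected `P`-edges at `L v`, outside the image of `Sym2.map L`. -/
lemma transfer {V W : Type*} {G : SimpleGraph V} {P : SimpleGraph W}
    {L : V → W} (hL : ∀ {a b}, G.Adj a b → P.Adj (L a) (L b)) (hLinj : Function.Injective L)
    {r r' : ℕ} {S : Set (Sym2 V)} {T' : Set (Sym2 W)}
    (extra : V → Finset (Sym2 W))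
    (hcard : ∀ v, r ≤ r' + (extra v).card)
    (hedge : ∀ v, ∀ f ∈ extra v, f ∈ P.edgeSet)
    (hmem : ∀ v, ∀ f ∈ extra v, L v ∈ f)
    (hinf : ∀ v, ∀ f ∈ extra v, Infected P r T' f)
    (hdisj : ∀ v, ∀ f ∈ extra v, ∀ g : Sym2 V, f ≠ Sym2.map L g)
    (hinit : ∀ f ∈ S, Infected P r T' (Sym2.map L f))
    {e : Sym2 V} (he : Infected G r' S e) : Infected P r T' (Sym2.map L e) := by
  classical
  induction he with
  | init h => exact hinit _ h
  | @step e he' v hv T hT hT1 hT2 hT3 ih =>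
    have hhom : Sym2.map L e ∈ P.edgeSet :=
      SimpleGraph.Hom.map_mem_edgeSet ⟨L, fun h => hL h⟩ he'
    refine Infected.step hhom (L v) (Sym2.mem_map.mpr ⟨v, hv, rfl⟩)
      (T.image (Sym2.map L) ∪ extra v) ?_ ?_ ?_ ?_
    · have hdis : Disjoint (T.image (Sym2.map L)) (extra v) := by
        rw [Finset.disjoint_left]
        rintro f hf hf2
        obtain ⟨g, _, rfl⟩ := Finset.mem_image.mp hf
        exact hdisj v _ hf2 g rfl
      rw [Finset.card_union_of_disjoint hdis,
        Finset.card_image_of_injective _ (Sym2.map.injective hLinj)]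
      have := hcard v
      omega
    · intro f hf
      rcases Finset.mem_union.mp hf with hf | hf
      · obtain ⟨g, hg, rfl⟩ := Finset.mem_image.mp hf
        exact SimpleGraph.Hom.map_mem_edgeSet ⟨L, fun h => hL h⟩ (hT1 g hg)
      · exact hedge v f hf
    · intro f hf
      rcases Finset.mem_union.mp hf with hf | hf
      · obtain ⟨g, hg, rfl⟩ := Finset.mem_image.mp hf
        exact Sym2.mem_map.mpr ⟨v, hT2 g hg, rfl⟩
      · exact hmem v f hf
    · intro f hf
      rcases Finset.mem_union.mp hf with hf | hf
      · obtain ⟨g, hg, rfl⟩ := Finset.mem_image.mp hf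
        exact ih g hg
      · exact hinf v f hf

lemma me_exists {V' : Type*} [Fintype V'] (H : SimpleGraph V') (r : ℕ) :
    ∃ S : Set (Sym2 V'), S.Finite ∧ Percolates H r S ∧ S.ncard = me H r := by
  have hne : {n | ∃ S : Set (Sym2 V'), S.Finite ∧ Percolates H r S ∧ S.ncard = n}.Nonempty :=
    ⟨H.edgeSet.ncard, H.edgeSet, Set.toFinite _,
      ⟨subset_rfl, fun e he => Infected.init he⟩, rfl⟩
  exact Nat.sInf_mem hne

lemma dcount_eq_filter {V : Type*} [Fintype V] (G : SimpleGraph V) (r t : ℕ) :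
    dcount G ((r : ℤ) - t) = (Finset.univ.filter (fun v => G.degree v + t = r)).card := by
  classical
  rw [dcount, Nat.card_eq_fintype_card]
  rw [Fintype.card_subtype]
  congr 1
  apply Finset.filter_congr
  intro v _
  constructor <;> (intro h; omega)

lemma count_bound {V : Type*} [Fintype V] (G : SimpleGraph V) (r k : ℕ) (hk : 1 ≤ k) :
    ∑ v : V, min (r - G.degree v) k ≤
      (∑ t ∈ Finset.Icc 1 (k - 1), t * dcount G ((r : ℤ) - t)) +
      k * ∑ t ∈ Finset.Icc k r, dcount G ((r : ℤ) - t) := by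
  classical
  have key : ∑ v : V, min (r - G.degree v) k =
      ∑ t ∈ Finset.Icc 1 (k-1) ∪ Finset.Icc k r, min t k *
        (Finset.univ.filter (fun v => G.degree v + t = r)).card := by
    have h1 : ∑ v : V, min (r - G.degree v) k =
        ∑ v ∈ Finset.univ.filter (fun v => G.degree v < r), min (r - G.degree v) k := by
      rw [Finset.sum_filter_of_ne]
      intro v _ h
      by_contra hdeg
      have : r - G.degree v = 0 := by omega
      simp [this] at h
    rw [h1]
    rw [← Finset.sum_fiberwise_of_maps_to (g := fun v => r - G.degree v)
      (t := Finset.Icc 1 (k-1) ∪ Finset.Icc k r) ?_ (fun v => min (r - G.degree v) k)]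
    · apply Finset.sum_congr rfl
      intro t ht
      have ht1 : 1 ≤ t := by
        rcases Finset.mem_union.mp ht with h | h <;>
          simp only [Finset.mem_Icc] at h <;> omega
      have hfe : (Finset.univ.filter (fun v => G.degree v < r)).filter
          (fun v => r - G.degree v = t) =
          Finset.univ.filter (fun v => G.degree v + t = r) := by
        ext v
        simp only [Finset.mem_filter, Finset.mem_univ, true_and]
        omega
      rw [Finset.sum_congr hfe (fun v hv => by
        simp only [Finset.mem_filter, Finset.mem_univ, true_and] at hv
        have : r - G.degree v = t := by omega
        rw [this])]
      rw [Finset.sum_const, smul_eq_mul, mul_comm]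
    · intro v hv
      simp only [Finset.mem_filter, Finset.mem_univ, true_and] at hv
      simp only [Finset.mem_union, Finset.mem_Icc]
      omega
  rw [key]
  have hdisj : Disjoint (Finset.Icc 1 (k-1)) (Finset.Icc k r) := by
    rw [Finset.disjoint_left]
    intro t h1 h2
    simp only [Finset.mem_Icc] at h1 h2
    omega
  rw [Finset.sum_union hdisj]
  gcongr ?_ + ?_
  · apply le_of_eq
    apply Finset.sum_congr rfl
    intro t ht
    simp only [Finset.mem_Icc] at ht
    rw [dcount_eq_filter]
    have : min t k = t := by omega
    rw [this]
  · rw [Finset.mul_sum]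
    apply le_of_eq
    apply Finset.sum_congr rfl
    intro t ht
    simp only [Finset.mem_Icc] at ht
    rw [dcount_eq_filter]
    have : min t k = k := by omega
    rw [this]

end Aux

open Fin.NatCast in
/-- Upper bound on `m_e(G □ S_k, r)` for the star `S_k` with `k` leaves. -/
theorem star_upper {V : Type*} [Fintype V] (G : SimpleGraph V) (r k : ℕ)
    (hr : 1 ≤ r) (hk : 1 ≤ k) :
    me (G □ starGraph k) r ≤
      me G r + k * me G (r - 1) +
      (∑ t ∈ Finset.Icc 1 (k - 1), t * dcount G ((r : ℤ) - t)) +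
      k * ∑ t ∈ Finset.Icc k r, dcount G ((r : ℤ) - t) := by
  classical
  obtain ⟨S₀, hS₀fin, hperc₀, hS₀card⟩ := me_exists G r
  obtain ⟨S₁, hS₁fin, hperc₁, hS₁card⟩ := me_exists G (r - 1)
  set P := G □ starGraph k with hP
  let L : Fin (k+1) → V → V × Fin (k+1) := fun i v => (v, i)
  have hLinj : ∀ i, Function.Injective (L i) := fun i a b h => congrArg Prod.fst h
  have hLadj : ∀ (i : Fin (k+1)) {a b : V}, G.Adj a b → P.Adj (L i a) (L i b) := by
    intro i a b h
    rw [SimpleGraph.boxProd_adj]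
    exact Or.inl ⟨h, rfl⟩
  have hvertadj : ∀ (v : V) (i : Fin (k+1)), i ≠ 0 → P.Adj (v, 0) (v, i) := by
    intro v i hi
    rw [SimpleGraph.boxProd_adj]
    refine Or.inr ⟨?_, rfl⟩
    rw [starGraph, SimpleGraph.fromRel_adj]
    exact ⟨fun h => hi h.symm, Or.inl rfl⟩
  have hsnd : ∀ (i : Fin (k+1)) (g : Sym2 V) (x : V × Fin (k+1)),
      x ∈ Sym2.map (L i) g → x.2 = i := by
    rintro i g x hx
    obtain ⟨a, _, rfl⟩ := Sym2.mem_map.mp hx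
    rfl
  -- the seed set
  let A : Finset (Sym2 (V × Fin (k+1))) := hS₀fin.toFinset.image (Sym2.map (L 0))
  let B : Finset (Sym2 (V × Fin (k+1))) :=
    (Finset.univ.filter (fun i : Fin (k+1) => i ≠ 0)).biUnion
      (fun i => hS₁fin.toFinset.image (Sym2.map (L i)))
  let Vert : V → Finset (Sym2 (V × Fin (k+1))) := fun v =>
    (Finset.Icc 1 (min (r - G.degree v) k)).image
      (fun t : ℕ => s((v, (0 : Fin (k+1))), (v, ((t : ℕ) : Fin (k+1)))))
  let C : Finset (Sym2 (V × Fin (k+1))) := Finset.univ.biUnion Vert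
  let F : Finset (Sym2 (V × Fin (k+1))) := A ∪ B ∪ C
  have hvalcast : ∀ t : ℕ, t ≤ k → ((t : Fin (k+1)) : ℕ) = t := by
    intro t ht
    exact Fin.val_cast_of_lt (by omega)
  have hVertmem : ∀ (v : V) (f : Sym2 (V × Fin (k+1))), f ∈ Vert v →
      ∃ t : ℕ, 1 ≤ t ∧ t ≤ min (r - G.degree v) k ∧
        f = s((v, (0 : Fin (k+1))), (v, (t : Fin (k+1)))) := by
    intro v f hf
    obtain ⟨t, ht, rfl⟩ := Finset.mem_image.mp hf
    rw [Finset.mem_Icc] at ht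
    exact ⟨t, ht.1, ht.2, rfl⟩
  have hVertedge : ∀ (v : V), ∀ f ∈ Vert v, f ∈ P.edgeSet := by
    intro v f hf
    obtain ⟨t, ht1, ht2, rfl⟩ := hVertmem v f hf
    rw [SimpleGraph.mem_edgeSet]
    apply hvertadj
    intro h0
    have := congrArg Fin.val h0
    rw [hvalcast t (le_trans ht2 (min_le_right _ _))] at this
    simp at this
    omega
  have hVertinf : ∀ (v : V), ∀ f ∈ Vert v, Infected P r (↑F) f := by
    intro v f hf
    apply Infected.init
    have : f ∈ F := Finset.mem_union_right _ (Finset.mem_biUnion.mpr ⟨v, Finset.mem_univ v, hf⟩)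
    exact_mod_cast this
  -- claim 1 : the central copy of G gets infected
  have claim1 : ∀ e ∈ G.edgeSet, Infected P r (↑F) (Sym2.map (L 0) e) := by
    intro e he
    refine transfer (hLadj 0) (hLinj 0) (fun _ => (∅ : Finset (Sym2 (V × Fin (k+1)))))
      (by simp) (by simp) (by simp) (by simp) (by simp) ?_ (hperc₀.2 e he)
    intro f hf
    apply Infected.init
    have : Sym2.map (L 0) f ∈ F := Finset.mem_union_left _ (Finset.mem_union_left _
      (Finset.mem_image_of_mem _ (hS₀fin.mem_toFinset.mpr hf)))
    exact_mod_cast this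
  -- claim 2 : all vertical edges get infected
  have claim2 : ∀ (v : V) (i : Fin (k+1)), i ≠ 0 → Infected P r (↑F) s((v, 0), (v, i)) := by
    intro v i hi
    have hival : 1 ≤ i.val := by
      rcases Nat.eq_zero_or_pos i.val with h | h
      · exact absurd (Fin.ext h) hi
      · omega
    by_cases hseed : i.val ≤ min (r - G.degree v) k
    · -- seeded vertical edge
      apply Infected.init
      have hmem : s((v, (0 : Fin (k+1))), (v, i)) ∈ Vert v := by
        apply Finset.mem_image.mpr
        refine ⟨i.val, Finset.mem_Icc.mpr ⟨hival, hseed⟩, ?_⟩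
        rw [Fin.cast_val_eq_self]
      have : s((v, (0 : Fin (k+1))), (v, i)) ∈ F :=
        Finset.mem_union_right _ (Finset.mem_biUnion.mpr ⟨v, Finset.mem_univ v, hmem⟩)
      exact_mod_cast this
    · -- infected via the rule at (v, 0)
      push_neg at hseed
      have hik : i.val ≤ k := by omega
      have hmlt : min (r - G.degree v) k < k := lt_of_lt_of_le hseed hik
      have hrle : r ≤ G.degree v + min (r - G.degree v) k := by omega
      set T : Finset (Sym2 (V × Fin (k+1))) :=
        (G.incidenceFinset v).image (Sym2.map (L 0)) ∪ Vert v with hT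
      have hTdisj : Disjoint ((G.incidenceFinset v).image (Sym2.map (L 0))) (Vert v) := by
        rw [Finset.disjoint_left]
        rintro f hf hf2
        obtain ⟨t, ht1, ht2, rfl⟩ := hVertmem v f hf2
        obtain ⟨g, _, hg⟩ := Finset.mem_image.mp hf
        have hvt : (v, ((t : ℕ) : Fin (k+1))) ∈ Sym2.map (L 0) g := by
          rw [hg]; exact Sym2.mem_mk_right _ _
        have := hsnd 0 g _ hvt
        simp only at this
        have := congrArg Fin.val this
        rw [hvalcast t (le_trans ht2 (min_le_right _ _))] at this
        simp at this
        omega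
      have hTcard : G.degree v + min (r - G.degree v) k ≤ T.card := by
        rw [hT, Finset.card_union_of_disjoint hTdisj,
          Finset.card_image_of_injective _ (Sym2.map.injective (hLinj 0)),
          SimpleGraph.card_incidenceFinset_eq_degree]
        have hVcard : (Vert v).card = min (r - G.degree v) k := by
          rw [Finset.card_image_of_injOn, Nat.card_Icc]
          · omega
          · intro t1 h1 t2 h2 heq
            simp only [Finset.mem_coe, Finset.mem_Icc] at h1 h2
            have hc1 : ((t1 : Fin (k+1)) : ℕ) = t1 := hvalcast t1 (le_trans h1.2 (min_le_right _ _))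
            have hc2 : ((t2 : Fin (k+1)) : ℕ) = t2 := hvalcast t2 (le_trans h2.2 (min_le_right _ _))
            rcases Sym2.eq_iff.mp heq with ⟨-, h⟩ | ⟨h, -⟩
            · have := congrArg (fun x : V × Fin (k+1) => (x.2 : ℕ)) h
              simpa [hc1, hc2] using this
            · have := congrArg (fun x : V × Fin (k+1) => (x.2 : ℕ)) h
              simp only [hc2] at this
              simp at this
              omega
        omega
      refine Infected.step (P.mem_edgeSet.mpr (hvertadj v i hi)) (v, 0)
        (Sym2.mem_mk_left _ _) T (le_trans hrle hTcard) ?_ ?_ ?_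
      · intro f hf
        rcases Finset.mem_union.mp hf with hf | hf
        · obtain ⟨g, hg, rfl⟩ := Finset.mem_image.mp hf
          have hginc := (G.mem_incidenceFinset v g).mp hg
          exact SimpleGraph.Hom.map_mem_edgeSet ⟨L 0, fun h => hLadj 0 h⟩ hginc.1
        · exact hVertedge v f hf
      · intro f hf
        rcases Finset.mem_union.mp hf with hf | hf
        · obtain ⟨g, hg, rfl⟩ := Finset.mem_image.mp hf
          have hginc := (G.mem_incidenceFinset v g).mp hg
          exact Sym2.mem_map.mpr ⟨v, hginc.2, rfl⟩
        · obtain ⟨t, ht1, ht2, rfl⟩ := hVertmem v f hf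
          exact Sym2.mem_mk_left _ _
      · intro f hf
        rcases Finset.mem_union.mp hf with hf | hf
        · obtain ⟨g, hg, rfl⟩ := Finset.mem_image.mp hf
          have hginc := (G.mem_incidenceFinset v g).mp hg
          exact claim1 g hginc.1
        · exact hVertinf v f hf
  -- claim 3 : each leaf copy of G gets infected
  have claim3 : ∀ (i : Fin (k+1)), i ≠ 0 → ∀ e ∈ G.edgeSet,
      Infected P r (↑F) (Sym2.map (L i) e) := by
    intro i hi e he
    refine transfer (hLadj i) (hLinj i)
      (fun v => ({s((v, (0 : Fin (k+1))), (v, i))} : Finset (Sym2 (V × Fin (k+1)))))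
      (fun v => by simp; omega) ?_ ?_ ?_ ?_ ?_ (hperc₁.2 e he)
    · intro v f hf
      rw [Finset.mem_singleton] at hf
      subst hf
      exact P.mem_edgeSet.mpr (hvertadj v i hi)
    · intro v f hf
      rw [Finset.mem_singleton] at hf
      subst hf
      exact Sym2.mem_mk_right _ _
    · intro v f hf
      rw [Finset.mem_singleton] at hf
      subst hf
      exact claim2 v i hi
    · intro v f hf g hfg
      rw [Finset.mem_singleton] at hf
      subst hf
      have : ((v, (0 : Fin (k+1))) : V × Fin (k+1)) ∈ Sym2.map (L i) g := by
        rw [← hfg]; exact Sym2.mem_mk_left _ _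
      have := hsnd i g _ this
      exact hi this.symm
    · intro f hf
      apply Infected.init
      have : Sym2.map (L i) f ∈ F := Finset.mem_union_left _ (Finset.mem_union_right _
        (Finset.mem_biUnion.mpr ⟨i, Finset.mem_filter.mpr ⟨Finset.mem_univ i, hi⟩,
          Finset.mem_image_of_mem _ (hS₁fin.mem_toFinset.mpr hf)⟩))
      exact_mod_cast this
  -- F is a percolating set
  have hFedge : (↑F : Set (Sym2 (V × Fin (k+1)))) ⊆ P.edgeSet := by
    intro f hf
    have hf' : f ∈ F := hf
    rcases Finset.mem_union.mp hf' with hf' | hf'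
    · rcases Finset.mem_union.mp hf' with hf' | hf'
      · obtain ⟨g, hg, rfl⟩ := Finset.mem_image.mp hf'
        exact SimpleGraph.Hom.map_mem_edgeSet ⟨L 0, fun h => hLadj 0 h⟩
          (hperc₀.1 (hS₀fin.mem_toFinset.mp hg))
      · obtain ⟨i, hi, hf''⟩ := Finset.mem_biUnion.mp hf'
        obtain ⟨g, hg, rfl⟩ := Finset.mem_image.mp hf''
        exact SimpleGraph.Hom.map_mem_edgeSet ⟨L i, fun h => hLadj i h⟩
          (hperc₁.1 (hS₁fin.mem_toFinset.mp hg))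
    · obtain ⟨v, _, hf''⟩ := Finset.mem_biUnion.mp hf'
      exact hVertedge v f hf''
  have hperc : Percolates P r (↑F) := by
    refine ⟨hFedge, ?_⟩
    intro e he
    induction e using Sym2.ind with
    | _ x y =>
      obtain ⟨x1, x2⟩ := x
      obtain ⟨y1, y2⟩ := y
      rw [SimpleGraph.mem_edgeSet, SimpleGraph.boxProd_adj] at he
      rcases he with ⟨hG, h2⟩ | ⟨hS, h1⟩
      · simp only at h2
        subst h2
        by_cases hx2 : x2 = 0
        · subst hx2
          have := claim1 s(x1, y1) (G.mem_edgeSet.mpr hG)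
          rw [Sym2.map_pair_eq] at this
          exact this
        · have := claim3 x2 hx2 s(x1, y1) (G.mem_edgeSet.mpr hG)
          rw [Sym2.map_pair_eq] at this
          exact this
      · simp only at h1
        subst h1
        rw [starGraph, SimpleGraph.fromRel_adj] at hS
        obtain ⟨hne, h0⟩ := hS
        rcases h0 with h0 | h0
        · subst h0
          exact claim2 x1 y2 (fun h => hne h.symm)
        · subst h0
          rw [Sym2.eq_swap]
          exact claim2 x1 x2 hne
  -- cardinality bound
  have hme : me P r ≤ F.card := by
    apply Nat.sInf_le
    exact ⟨(↑F : Set (Sym2 (V × Fin (k+1)))), Set.toFinite _, hperc, Set.ncard_coe_finset F⟩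
  have hA : A.card ≤ me G r := by
    calc A.card ≤ hS₀fin.toFinset.card := Finset.card_image_le
    _ = S₀.ncard := (Set.ncard_eq_toFinset_card S₀ hS₀fin).symm
    _ = me G r := hS₀card
  have hB : B.card ≤ k * me G (r - 1) := by
    calc B.card ≤ ∑ i ∈ Finset.univ.filter (fun i : Fin (k+1) => i ≠ 0),
        (hS₁fin.toFinset.image (Sym2.map (L i))).card := Finset.card_biUnion_le
    _ ≤ ∑ _i ∈ Finset.univ.filter (fun i : Fin (k+1) => i ≠ 0), me G (r - 1) := by
        apply Finset.sum_le_sum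
        intro i _
        calc (hS₁fin.toFinset.image (Sym2.map (L i))).card ≤ hS₁fin.toFinset.card :=
            Finset.card_image_le
        _ = S₁.ncard := (Set.ncard_eq_toFinset_card S₁ hS₁fin).symm
        _ = me G (r - 1) := hS₁card
    _ = (Finset.univ.filter (fun i : Fin (k+1) => i ≠ 0)).card * me G (r - 1) := by
        rw [Finset.sum_const, smul_eq_mul]
    _ = k * me G (r - 1) := by
        rw [Finset.filter_ne', Finset.card_erase_of_mem (Finset.mem_univ _),
          Finset.card_univ, Fintype.card_fin]
        simp
  have hC : C.card ≤ ∑ v : V, min (r - G.degree v) k := by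
    calc C.card ≤ ∑ v : V, (Vert v).card := Finset.card_biUnion_le
    _ ≤ ∑ v : V, min (r - G.degree v) k := by
        apply Finset.sum_le_sum
        intro v _
        calc (Vert v).card ≤ (Finset.Icc 1 (min (r - G.degree v) k)).card :=
            Finset.card_image_le
        _ = min (r - G.degree v) k := by rw [Nat.card_Icc]; omega
  calc me P r ≤ F.card := hme
  _ ≤ (A ∪ B).card + C.card := Finset.card_union_le _ _
  _ ≤ A.card + B.card + C.card := by
      have := Finset.card_union_le A B
      omega
  _ ≤ me G r + k * me G (r - 1) + ∑ v : V, min (r - G.degree v) k := by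
      have := hA; have := hB; have := hC; omega
  _ ≤ me G r + k * me G (r - 1) +
      ((∑ t ∈ Finset.Icc 1 (k - 1), t * dcount G ((r : ℤ) - t)) +
        k * ∑ t ∈ Finset.Icc k r, dcount G ((r : ℤ) - t)) := by
      have := count_bound G r k hk
      omega
  _ = me G r + k * me G (r - 1) +
      (∑ t ∈ Finset.Icc 1 (k - 1), t * dcount G ((r : ℤ) - t)) +
      k * ∑ t ∈ Finset.Icc k r, dcount G ((r : ℤ) - t) := by ring

end BondPerc
end

section
/- Upper bound for products with trees: let T be a tree on n ≥ 2 vertices, r ∈ ℤ⁺, G any graph. Then m_e(G□T, r) ≤ m_e(G,r) + (n−1)·m_e(G,r−1) + d^G_{r−1} + Σ_{t=1}^{r−1} d^G_{r−1−t}·(1 + t·Σ_{i=t+1}^{Δ(T)} d^T_i + Σ_{i=2}^{t} (i−1)·d^T_i). -/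
open Polynomial

namespace BondPerc

open Classical

set_option maxHeartbeats 1000000

section Helpers

variable {V W : Type*}

private lemma embInj (w : W) : Function.Injective (fun a : V => (a, w)) :=
  fun _ _ h => congrArg Prod.fst h

private lemma colInj (v : V) : Function.Injective (fun x : W => (v, x)) :=
  fun _ _ h => congrArg Prod.snd h

private lemma emb_edge (G : SimpleGraph V) (T : SimpleGraph W) (w : W) {e : Sym2 V}
    (he : e ∈ G.edgeSet) : e.map (fun a => (a, w)) ∈ (G □ T).edgeSet := by
  induction e using Sym2.ind with
  | _ a b =>
    rw [Sym2.map_pair_eq, SimpleGraph.mem_edgeSet] at *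
    exact SimpleGraph.boxProd_adj.mpr (Or.inl ⟨he, rfl⟩)

private lemma col_edge (G : SimpleGraph V) (T : SimpleGraph W) (v : V) {e : Sym2 W}
    (he : e ∈ T.edgeSet) : e.map (fun x => (v, x)) ∈ (G □ T).edgeSet := by
  induction e using Sym2.ind with
  | _ a b =>
    rw [Sym2.map_pair_eq, SimpleGraph.mem_edgeSet] at *
    exact SimpleGraph.boxProd_adj.mpr (Or.inr ⟨he, rfl⟩)

private lemma emb_mem {v : V} {e : Sym2 V} (hv : v ∈ e) (w : W) :
    (v, w) ∈ e.map (fun a => (a, w)) := Sym2.mem_map.mpr ⟨v, hv, rfl⟩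

private lemma col_mem (v : V) {u : W} {e : Sym2 W} (hu : u ∈ e) :
    (v, u) ∈ e.map (fun x => (v, x)) := Sym2.mem_map.mpr ⟨u, hu, rfl⟩

private lemma emb_ne_col {G : SimpleGraph V} {u : W} {v : V}
    {e : Sym2 V} {e' : Sym2 W} (he : e ∈ G.edgeSet) :
    e.map (fun a => (a, u)) ≠ e'.map (fun x => (v, x)) := by
  induction e using Sym2.ind with
  | _ a b =>
    induction e' using Sym2.ind with
    | _ c d =>
      intro h
      rw [Sym2.map_pair_eq, Sym2.map_pair_eq, Sym2.eq_iff] at h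
      have hab : a ≠ b := (G.mem_edgeSet.1 he).ne
      rcases h with ⟨h1, h2⟩ | ⟨h1, h2⟩ <;>
        exact hab ((congrArg Prod.fst h1).trans (congrArg Prod.fst h2).symm)

private lemma exists_min_perc [Fintype V] (G : SimpleGraph V) (r : ℕ) :
    ∃ A : Set (Sym2 V), A.Finite ∧ Percolates G r A ∧ A.ncard = me G r := by
  have hne : {n | ∃ S : Set (Sym2 V), S.Finite ∧ Percolates G r S ∧ S.ncard = n}.Nonempty :=
    ⟨G.edgeSet.ncard, G.edgeSet, Set.toFinite _,
      ⟨subset_rfl, fun _ he => Infected.init he⟩, rfl⟩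
  obtain ⟨S, h1, h2, h3⟩ := Nat.sInf_mem hne
  exact ⟨S, h1, h2, h3⟩

private lemma sim (G : SimpleGraph V) (T : SimpleGraph W) (r k : ℕ) (w : W)
    (A : Set (Sym2 V)) (S : Set (Sym2 (V × W))) (D : V → Finset (Sym2 (V × W)))
    (hA : ∀ f ∈ A, Infected (G □ T) r S (f.map (fun a => (a, w))))
    (hDcard : ∀ u : V, r ≤ k + (D u).card)
    (hDgood : ∀ u : V, ∀ f ∈ D u, f ∈ (G □ T).edgeSet ∧ (u, w) ∈ f ∧
      (∃ x ∈ f, x.2 ≠ w) ∧ Infected (G □ T) r S f)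
    {e : Sym2 V} (he : Infected G k A e) :
    Infected (G □ T) r S (e.map (fun a => (a, w))) := by
  induction he with
  | init hf => exact hA _ hf
  | @step e he v hv Tf hTk hT1 hT2 hT3 ih =>
    refine Infected.step (emb_edge G T w he) (v, w) (emb_mem hv w)
      (Tf.image (Sym2.map (fun a => (a, w))) ∪ D v) ?_ ?_ ?_ ?_
    · have hdisj : Disjoint (Tf.image (Sym2.map (fun a => (a, w)))) (D v) := by
        rw [Finset.disjoint_left]
        rintro g hg hgD
        obtain ⟨f, _, rfl⟩ := Finset.mem_image.1 hg
        obtain ⟨x, hx, hxw⟩ := (hDgood v _ hgD).2.2.1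
        obtain ⟨a, _, rfl⟩ := Sym2.mem_map.1 hx
        exact hxw rfl
      rw [Finset.card_union_of_disjoint hdisj,
        Finset.card_image_of_injective _ (Sym2.map.injective (embInj w))]
      exact le_trans (hDcard v) (Nat.add_le_add_right hTk _)
    · intro f hf
      rcases Finset.mem_union.1 hf with h | h
      · obtain ⟨f', hf', rfl⟩ := Finset.mem_image.1 h
        exact emb_edge G T w (hT1 f' hf')
      · exact (hDgood v f h).1
    · intro f hf
      rcases Finset.mem_union.1 hf with h | h
      · obtain ⟨f', hf', rfl⟩ := Finset.mem_image.1 h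
        exact emb_mem (hT2 f' hf') w
      · exact (hDgood v f h).2.1
    · intro f hf
      rcases Finset.mem_union.1 hf with h | h
      · obtain ⟨f', hf', rfl⟩ := Finset.mem_image.1 h
        exact ih f' hf'
      · exact (hDgood v f h).2.2.2

end Helpers

private lemma tree_struct {W : Type*} (T : SimpleGraph W) (hT : T.IsTree) (ρ : W) :
    ∃ (par : W → W) (dep : W → ℕ),
      par ρ = ρ ∧
      (∀ w, w ≠ ρ → T.Adj w (par w)) ∧
      (∀ w, w ≠ ρ → dep (par w) + 1 = dep w) ∧
      (∀ w w', T.Adj w w' → par w = w' ∨ par w' = w) := by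
  have hEU := hT.existsUnique_path
  set Q : ∀ v w : W, T.Walk v w := fun v w => (hEU v w).choose with hQdef
  have hQ : ∀ v w, (Q v w).IsPath := fun v w => (hEU v w).choose_spec.1
  have hQu : ∀ v w (p : T.Walk v w), p.IsPath → p = Q v w :=
    fun v w p hp => (hEU v w).choose_spec.2 p hp
  refine ⟨fun w => (Q w ρ).getVert 1, fun w => (Q w ρ).length, ?_, ?_, ?_, ?_⟩
  · have h0 : (SimpleGraph.Walk.nil : T.Walk ρ ρ) = Q ρ ρ :=
      hQu ρ ρ _ SimpleGraph.Walk.IsPath.nil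
    show (Q ρ ρ).getVert 1 = ρ
    rw [← h0]
    exact SimpleGraph.Walk.getVert_of_length_le _ (by simp)
  · intro w hw
    obtain ⟨u, h, q, hq⟩ := SimpleGraph.Walk.exists_eq_cons_of_ne hw (Q w ρ)
    show T.Adj w ((Q w ρ).getVert 1)
    rw [hq, SimpleGraph.Walk.getVert_cons_succ, SimpleGraph.Walk.getVert_zero]
    exact h
  · intro w hw
    obtain ⟨u, h, q, hq⟩ := SimpleGraph.Walk.exists_eq_cons_of_ne hw (Q w ρ)
    have hqp : q.IsPath := by
      have := hQ w ρ; rw [hq] at this; exact this.of_cons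
    have hqQ : q = Q u ρ := hQu u ρ q hqp
    have hpar : (Q w ρ).getVert 1 = u := by
      rw [hq, SimpleGraph.Walk.getVert_cons_succ, SimpleGraph.Walk.getVert_zero]
    show (Q ((Q w ρ).getVert 1) ρ).length + 1 = (Q w ρ).length
    rw [hpar, ← hqQ, hq, SimpleGraph.Walk.length_cons]
  · intro w w' hadj
    by_cases hw' : w' ∈ (Q w ρ).support
    · left
      have htake : (Q w ρ).takeUntil w' hw' = SimpleGraph.Walk.cons hadj SimpleGraph.Walk.nil := by
        rw [hQu w w' _ ((hQ w ρ).takeUntil hw'),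
          hQu w w' _ (SimpleGraph.Walk.IsPath.nil.cons (by simpa using hadj.ne))]
      have hQw : Q w ρ = SimpleGraph.Walk.cons hadj ((Q w ρ).dropUntil w' hw') := by
        conv_lhs => rw [← (Q w ρ).take_spec hw']
        rw [htake]
        rfl
      show (Q w ρ).getVert 1 = w'
      rw [hQw, SimpleGraph.Walk.getVert_cons_succ, SimpleGraph.Walk.getVert_zero]
    · right
      have hpath : (SimpleGraph.Walk.cons hadj.symm (Q w ρ)).IsPath := (hQ w ρ).cons hw'
      show (Q w' ρ).getVert 1 = w
      rw [← hQu w' ρ _ hpath, SimpleGraph.Walk.getVert_cons_succ,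
        SimpleGraph.Walk.getVert_zero]


private lemma dcount_nat {U : Type*} [Fintype U] (H : SimpleGraph U) (i : ℕ) :
    dcount H (i : ℤ) = (Finset.univ.filter fun u => H.degree u = i).card := by
  rw [dcount, Nat.card_eq_fintype_card, Fintype.card_subtype]
  congr 1
  ext u
  simp [Nat.cast_inj]

private lemma sum_comp_degree {W : Type*} [Fintype W] (T : SimpleGraph W) (f : ℕ → ℕ) (M : ℕ)
    (hM : ∀ u, T.degree u < M) :
    ∑ u : W, f (T.degree u) =
      ∑ i ∈ Finset.range M, (Finset.univ.filter fun u => T.degree u = i).card * f i := by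
  rw [← Finset.sum_fiberwise_of_maps_to' (fun u _ => Finset.mem_range.2 (hM u)) f]
  exact Finset.sum_congr rfl fun i _ => by rw [Finset.sum_const, smul_eq_mul]

private lemma sum_min_deg {W : Type*} [Fintype W] (T : SimpleGraph W) (t : ℕ) :
    ∑ u : W, (min (t + 1) (T.degree u) - 1) =
      t * (∑ i ∈ Finset.Icc (t + 1) T.maxDegree, dcount T (i : ℤ)) +
      ∑ i ∈ Finset.Icc 2 t, (i - 1) * dcount T (i : ℤ) := by
  classical
  set Dc : ℕ → ℕ := fun i => (Finset.univ.filter fun u => T.degree u = i).card with hDc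
  have hDc0 : ∀ i, T.maxDegree < i → Dc i = 0 := by
    intro i hi
    rw [hDc, Finset.card_eq_zero]
    ext u
    simp only [Finset.mem_filter, Finset.mem_univ, true_and, Finset.notMem_empty, iff_false]
    intro h
    exact absurd (h ▸ T.degree_le_maxDegree u) (by omega)
  set M := T.maxDegree + t + 2 with hM
  rw [sum_comp_degree T (fun i => min (t + 1) i - 1) M
    (fun u => by have := T.degree_le_maxDegree u; omega)]
  have key : ∀ i ∈ Finset.range M, Dc i * (min (t + 1) i - 1) =
      (if t + 1 ≤ i then Dc i * t else 0) + (if 2 ≤ i ∧ i ≤ t then Dc i * (i - 1) else 0) := by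
    intro i _
    rcases le_or_gt (t + 1) i with h | h
    · rw [if_pos h, if_neg (by omega), Nat.min_eq_left h, Nat.add_sub_cancel, Nat.add_zero]
    · rw [if_neg (by omega), Nat.min_eq_right (by omega), Nat.zero_add]
      by_cases h2 : 2 ≤ i
      · rw [if_pos ⟨h2, by omega⟩]
      · rw [if_neg (by omega), show i - 1 = 0 by omega, Nat.mul_zero]
  rw [Finset.sum_congr rfl key, Finset.sum_add_distrib]
  congr 1
  · have hsub : Finset.Icc (t + 1) T.maxDegree ⊆
        (Finset.range M).filter (fun i => t + 1 ≤ i) := by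
      intro i hi
      rw [Finset.mem_Icc] at hi
      rw [Finset.mem_filter, Finset.mem_range]
      exact ⟨by omega, hi.1⟩
    calc ∑ i ∈ Finset.range M, (if t + 1 ≤ i then Dc i * t else 0)
        = ∑ i ∈ (Finset.range M).filter (fun i => t + 1 ≤ i), Dc i * t :=
          (Finset.sum_filter _ _).symm
      _ = ∑ i ∈ Finset.Icc (t + 1) T.maxDegree, Dc i * t := by
          refine (Finset.sum_subset hsub ?_).symm
          intro i hi hni
          rw [Finset.mem_filter, Finset.mem_range] at hi
          rw [Finset.mem_Icc] at hni
          rw [hDc0 i (by omega), Nat.zero_mul]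
      _ = t * ∑ i ∈ Finset.Icc (t + 1) T.maxDegree, dcount T (i : ℤ) := by
          rw [Finset.mul_sum]
          exact Finset.sum_congr rfl fun i _ => by rw [dcount_nat, Nat.mul_comm]
  · have hset : (Finset.range M).filter (fun i => 2 ≤ i ∧ i ≤ t) = Finset.Icc 2 t := by
      ext i
      simp only [Finset.mem_filter, Finset.mem_range, Finset.mem_Icc]
      omega
    calc ∑ i ∈ Finset.range M, (if 2 ≤ i ∧ i ≤ t then Dc i * (i - 1) else 0)
        = ∑ i ∈ (Finset.range M).filter (fun i => 2 ≤ i ∧ i ≤ t), Dc i * (i - 1) :=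
          (Finset.sum_filter _ _).symm
      _ = ∑ i ∈ Finset.Icc 2 t, (i - 1) * dcount T (i : ℤ) := by
          rw [hset]
          exact Finset.sum_congr rfl fun i _ => by rw [dcount_nat, Nat.mul_comm]


/-- Upper bound on `m_e(G □ T, r)` for a tree `T` on `n ≥ 2` vertices. -/
theorem tree_upper {V W : Type*} [Fintype V] [Fintype W] (G : SimpleGraph V)
    (T : SimpleGraph W) (hT : T.IsTree) (hn : 2 ≤ Fintype.card W) (r : ℕ) (hr : 1 ≤ r) :
    me (G □ T) r ≤
      me G r + (Fintype.card W - 1) * me G (r - 1) + dcount G ((r : ℤ) - 1) +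
      ∑ t ∈ Finset.Icc 1 (r - 1),
        dcount G ((r : ℤ) - 1 - t) *
          (1 + t * (∑ i ∈ Finset.Icc (t + 1) T.maxDegree, dcount T (i : ℤ)) +
            ∑ i ∈ Finset.Icc 2 t, (i - 1) * dcount T (i : ℤ)) := by
  classical
  obtain ⟨A, hAfin, hAperc, hAcard⟩ := exists_min_perc G r
  obtain ⟨B, hBfin, hBperc, hBcard⟩ := exists_min_perc G (r - 1)
  have hWne : Nonempty W := Fintype.card_pos_iff.mp (by omega)
  obtain ⟨ρ⟩ := hWne
  obtain ⟨par, dep, hparρ, hpadj, hpdep, hpedge⟩ := tree_struct T hT ρ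
  have hTdeg : ∀ u : W, 1 ≤ T.degree u := by
    intro u
    obtain ⟨y, hy⟩ := Fintype.exists_ne_of_one_lt_card (by omega) u
    obtain ⟨p⟩ := hT.isConnected.preconnected u y
    obtain ⟨b, hb, _, _⟩ := SimpleGraph.Walk.exists_eq_cons_of_ne (Ne.symm hy) p
    exact (T.degree_pos_iff_exists_adj u).2 ⟨b, hb⟩
  have hGinc : ∀ (v : V) (e : Sym2 V), e ∈ G.incidenceFinset v → e ∈ G.edgeSet ∧ v ∈ e := by
    intro v e h
    rw [SimpleGraph.mem_incidenceFinset] at h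
    exact ⟨h.1, h.2⟩
  set s : V → ℕ := fun v => r - G.degree v with hs
  have hsval : ∀ v, s v = r - G.degree v := fun v => rfl
  set pool : W → Finset (Sym2 W) :=
    fun u => if u = ρ then T.incidenceFinset u else (T.incidenceFinset u).erase s(u, par u)
    with hpool
  have hpoolsub : ∀ u, pool u ⊆ T.incidenceFinset u := by
    intro u
    simp only [hpool]
    split_ifs
    exacts [subset_rfl, Finset.erase_subset _ _]
  have hpooledge : ∀ u, ∀ e ∈ pool u, e ∈ T.edgeSet ∧ u ∈ e := by
    intro u e he
    have h2 := hpoolsub u he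
    rw [SimpleGraph.mem_incidenceFinset] at h2
    exact ⟨h2.1, h2.2⟩
  have hparmem : ∀ u, u ≠ ρ → s(u, par u) ∈ T.incidenceFinset u := by
    intro u hu
    rw [SimpleGraph.mem_incidenceFinset]
    exact T.mk'_mem_incidenceSet_left_iff.2 (hpadj u hu)
  have hpoolcard : ∀ u, (pool u).card = if u = ρ then T.degree u else T.degree u - 1 := by
    intro u
    simp only [hpool]
    by_cases hu : u = ρ
    · rw [if_pos hu, if_pos hu, SimpleGraph.card_incidenceFinset_eq_degree]
    · rw [if_neg hu, if_neg hu, Finset.card_erase_of_mem (hparmem u hu),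
        SimpleGraph.card_incidenceFinset_eq_degree]
  have hpoolnotpar : ∀ u, u ≠ ρ → s(u, par u) ∉ pool u := by
    intro u hu
    simp only [hpool]
    rw [if_neg hu]
    exact Finset.notMem_erase _ _
  set target : V → W → ℕ :=
    fun v u => if u = ρ then min (s v) (T.degree u) else min (s v) (T.degree u) - 1
    with htarget
  have hex : ∀ v u, ∃ Fv : Finset (Sym2 W), Fv ⊆ pool u ∧ Fv.card = target v u := by
    intro v u
    apply Finset.exists_subset_card_eq
    rw [hpoolcard u]
    simp only [htarget]
    have hmin := min_le_right (s v) (T.degree u)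
    split_ifs <;> omega
  choose F hFsub hFcard using hex
  set lowF : Finset V := Finset.univ.filter (fun v => G.degree v < r) with hlowF
  set SF : Finset (Sym2 (V × W)) :=
    (hAfin.toFinset.image (Sym2.map (fun a => (a, ρ)))) ∪
    ((Finset.univ.erase ρ).biUnion fun w => hBfin.toFinset.image (Sym2.map (fun a => (a, w)))) ∪
    (lowF.biUnion fun v => Finset.univ.biUnion fun u =>
      (F v u).image (Sym2.map (fun x => (v, x)))) with hSF
  set S : Set (Sym2 (V × W)) := (SF : Set (Sym2 (V × W))) with hSdef
  have hseedA : ∀ f ∈ A, (f.map (fun a => (a, ρ))) ∈ S := by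
    intro f hf
    rw [hSdef]
    rw [Finset.mem_coe, hSF]
    exact Finset.mem_union_left _ (Finset.mem_union_left _
      (Finset.mem_image_of_mem _ (hAfin.mem_toFinset.2 hf)))
  have hseedB : ∀ w, w ≠ ρ → ∀ f ∈ B, (f.map (fun a => (a, w))) ∈ S := by
    intro w hw f hf
    rw [hSdef, Finset.mem_coe, hSF]
    refine Finset.mem_union_left _ (Finset.mem_union_right _ ?_)
    exact Finset.mem_biUnion.2 ⟨w, Finset.mem_erase.2 ⟨hw, Finset.mem_univ w⟩,
      Finset.mem_image_of_mem _ (hBfin.mem_toFinset.2 hf)⟩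
  have hseedF : ∀ v, G.degree v < r → ∀ u : W, ∀ e ∈ F v u,
      (e.map (fun x => (v, x))) ∈ S := by
    intro v hv u e he
    rw [hSdef, Finset.mem_coe, hSF]
    refine Finset.mem_union_right _ ?_
    refine Finset.mem_biUnion.2 ⟨v, ?_, ?_⟩
    · rw [hlowF]; exact Finset.mem_filter.2 ⟨Finset.mem_univ v, hv⟩
    · exact Finset.mem_biUnion.2 ⟨u, Finset.mem_univ u, Finset.mem_image_of_mem _ he⟩
  -- the main inductive claim
  have key : ∀ n : ℕ, ∀ w : W, dep w ≤ n →
      ((w ≠ ρ → ∀ v : V, Infected (G □ T) r S (Sym2.map (fun x => (v, x)) s(w, par w))) ∧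
       (∀ e ∈ G.edgeSet, Infected (G □ T) r S (e.map (fun a => (a, w))))) := by
    intro n
    induction n using Nat.strong_induction_on with
    | _ n IH =>
      intro w hdepw
      have Rw : w ≠ ρ → ∀ v : V,
          Infected (G □ T) r S (Sym2.map (fun x => (v, x)) s(w, par w)) := by
        intro hw v
        have hwadj : T.Adj w (par w) := hpadj w hw
        have hdep : dep (par w) + 1 = dep w := hpdep w hw
        have hΦu := IH (n - 1) (by omega) (par w) (by omega)
        by_cases hvlow : G.degree v < r
        · by_cases hdegu : T.degree (par w) < s v
          · -- the column edge is itself a seed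
            have hFeq : F v (par w) = pool (par w) := by
              refine Finset.eq_of_subset_of_card_le (hFsub v (par w)) ?_
              rw [hFcard v (par w), hpoolcard (par w)]
              simp only [htarget]
              rw [Nat.min_eq_right (le_of_lt hdegu)]
            have hmem : s(par w, w) ∈ pool (par w) := by
              simp only [hpool]
              have hinc : s(par w, w) ∈ T.incidenceFinset (par w) := by
                rw [SimpleGraph.mem_incidenceFinset]
                exact T.mk'_mem_incidenceSet_left_iff.2 hwadj.symm
              by_cases huρ : par w = ρ
              · rw [if_pos huρ]; exact hinc
              · rw [if_neg huρ]
                refine Finset.mem_erase.2 ⟨?_, hinc⟩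
                intro hcontra
                rcases Sym2.eq_iff.1 hcontra with ⟨_, h2⟩ | ⟨h1, h2⟩
                · have := hpdep (par w) huρ
                  rw [← h2] at this
                  omega
                · exact hwadj.ne' h2.symm
            have hseed : Sym2.map (fun x => (v, x)) s(par w, w) ∈ S := by
              refine hseedF v hvlow (par w) _ ?_
              rw [hFeq]; exact hmem
            rw [show (s(w, par w) : Sym2 W) = s(par w, w) from Sym2.eq_swap]
            exact Infected.init hseed
          · -- build an infection step at the vertex (v, par w)
            push_neg at hdegu
            have hsv1 : 1 ≤ s v := by rw [hsval]; omega
            set Pu : Finset (Sym2 W) :=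
              if par w = ρ then ∅ else {s(par w, par (par w))} with hPu
            have hcardFPu : (F v (par w) ∪ Pu).card = s v := by
              by_cases huρ : par w = ρ
              · rw [hPu, if_pos huρ, Finset.union_empty, hFcard]
                simp only [htarget]
                rw [if_pos huρ, Nat.min_eq_left hdegu]
              · rw [hPu, if_neg huρ, Finset.card_union_of_disjoint (by
                  rw [Finset.disjoint_singleton_right]
                  exact fun hc => hpoolnotpar (par w) huρ (hFsub v (par w) hc))]
                rw [Finset.card_singleton, hFcard]
                simp only [htarget]
                rw [if_neg huρ, Nat.min_eq_left hdegu]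
                omega
            have hFPu : ∀ e ∈ F v (par w) ∪ Pu, (e ∈ T.edgeSet ∧ par w ∈ e) ∧
                Infected (G □ T) r S (Sym2.map (fun x => (v, x)) e) := by
              intro e heFP
              rcases Finset.mem_union.1 heFP with h | h
              · exact ⟨hpooledge (par w) e (hFsub v (par w) h),
                  Infected.init (hseedF v hvlow (par w) e h)⟩
              · rw [hPu] at h
                by_cases huρ : par w = ρ
                · rw [if_pos huρ] at h
                  exact absurd h (Finset.notMem_empty e)
                · rw [if_neg huρ, Finset.mem_singleton] at h
                  subst h
                  exact ⟨⟨T.mem_edgeSet.2 (hpadj (par w) huρ), Sym2.mem_mk_left _ _⟩,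
                    hΦu.1 huρ v⟩
            refine Infected.step (col_edge G T v (T.mem_edgeSet.2 hwadj)) (v, par w)
              (col_mem v (Sym2.mem_mk_right w (par w)))
              (((G.incidenceFinset v).image (Sym2.map (fun a => (a, par w)))) ∪
               ((F v (par w) ∪ Pu).image (Sym2.map (fun x => (v, x))))) ?_ ?_ ?_ ?_
            · have hdisj : Disjoint
                  ((G.incidenceFinset v).image (Sym2.map (fun a => (a, par w))))
                  ((F v (par w) ∪ Pu).image (Sym2.map (fun x => (v, x)))) := by
                rw [Finset.disjoint_left]
                rintro g hg1 hg2
                obtain ⟨f1, hf1, rfl⟩ := Finset.mem_image.1 hg1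
                obtain ⟨f2, hf2, heq⟩ := Finset.mem_image.1 hg2
                exact emb_ne_col (hGinc v f1 hf1).1 heq.symm
              rw [Finset.card_union_of_disjoint hdisj,
                Finset.card_image_of_injective _ (Sym2.map.injective (embInj (par w))),
                Finset.card_image_of_injective _ (Sym2.map.injective (colInj v)),
                SimpleGraph.card_incidenceFinset_eq_degree, hcardFPu, hsval]
              omega
            · intro f hf
              rcases Finset.mem_union.1 hf with h | h
              · obtain ⟨f1, hf1, rfl⟩ := Finset.mem_image.1 h
                exact emb_edge G T (par w) (hGinc v f1 hf1).1
              · obtain ⟨f2, hf2, rfl⟩ := Finset.mem_image.1 h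
                exact col_edge G T v ((hFPu f2 hf2).1.1
                  : f2 ∈ T.edgeSet)
            · intro f hf
              rcases Finset.mem_union.1 hf with h | h
              · obtain ⟨f1, hf1, rfl⟩ := Finset.mem_image.1 h
                exact emb_mem (hGinc v f1 hf1).2 (par w)
              · obtain ⟨f2, hf2, rfl⟩ := Finset.mem_image.1 h
                exact col_mem v (hFPu f2 hf2).1.2
            · intro f hf
              rcases Finset.mem_union.1 hf with h | h
              · obtain ⟨f1, hf1, rfl⟩ := Finset.mem_image.1 h
                exact hΦu.2 f1 (hGinc v f1 hf1).1
              · obtain ⟨f2, hf2, rfl⟩ := Finset.mem_image.1 h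
                exact (hFPu f2 hf2).2
        · -- high degree vertex
          push_neg at hvlow
          refine Infected.step (col_edge G T v (T.mem_edgeSet.2 hwadj)) (v, par w)
            (col_mem v (Sym2.mem_mk_right w (par w)))
            ((G.incidenceFinset v).image (Sym2.map (fun a => (a, par w)))) ?_ ?_ ?_ ?_
          · rw [Finset.card_image_of_injective _ (Sym2.map.injective (embInj (par w))),
              SimpleGraph.card_incidenceFinset_eq_degree]
            exact hvlow
          · intro f hf
            obtain ⟨f1, hf1, rfl⟩ := Finset.mem_image.1 hf
            exact emb_edge G T (par w) (hGinc v f1 hf1).1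
          · intro f hf
            obtain ⟨f1, hf1, rfl⟩ := Finset.mem_image.1 hf
            exact emb_mem (hGinc v f1 hf1).2 (par w)
          · intro f hf
            obtain ⟨f1, hf1, rfl⟩ := Finset.mem_image.1 hf
            exact hΦu.2 f1 (hGinc v f1 hf1).1
      refine ⟨Rw, ?_⟩
      by_cases hwρ : w = ρ
      · subst hwρ
        intro e he
        exact sim G T r r w A S (fun _ => ∅)
          (fun f hf => Infected.init (hseedA f hf))
          (fun u => by simp)
          (fun u f hf => absurd hf (Finset.notMem_empty f))
          (hAperc.2 e he)
      · intro e he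
        refine sim G T r (r - 1) w B S
          (fun a => {Sym2.map (fun x => (a, x)) s(w, par w)})
          (fun f hf => Infected.init (hseedB w hwρ f hf))
          (fun u => by rw [Finset.card_singleton]; omega) ?_ (hBperc.2 e he)
        intro a f hf
        rw [Finset.mem_singleton] at hf
        subst hf
        refine ⟨col_edge G T a (T.mem_edgeSet.2 (hpadj w hwρ)),
          col_mem a (Sym2.mem_mk_left w (par w)),
          ⟨(a, par w), col_mem a (Sym2.mem_mk_right w (par w)), (hpadj w hwρ).ne'⟩,
          Rw hwρ a⟩
  -- S percolates
  have hSFmem : ∀ g ∈ SF, (∃ f ∈ A, g = f.map (fun a => (a, ρ))) ∨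
      (∃ w, ∃ f ∈ B, g = f.map (fun a => (a, w))) ∨
      (∃ v, G.degree v < r ∧ ∃ u : W, ∃ e ∈ F v u, g = e.map (fun x => (v, x))) := by
    intro g hg
    rw [hSF] at hg
    rcases Finset.mem_union.1 hg with hg | hg
    · rcases Finset.mem_union.1 hg with hg | hg
      · obtain ⟨f, hf, rfl⟩ := Finset.mem_image.1 hg
        exact Or.inl ⟨f, hAfin.mem_toFinset.1 hf, rfl⟩
      · obtain ⟨w, _, hw2⟩ := Finset.mem_biUnion.1 hg
        obtain ⟨f, hf, rfl⟩ := Finset.mem_image.1 hw2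
        exact Or.inr (Or.inl ⟨w, f, hBfin.mem_toFinset.1 hf, rfl⟩)
    · obtain ⟨v, hv1, hv2⟩ := Finset.mem_biUnion.1 hg
      obtain ⟨u, _, hu2⟩ := Finset.mem_biUnion.1 hv2
      obtain ⟨e, he, rfl⟩ := Finset.mem_image.1 hu2
      rw [hlowF] at hv1
      exact Or.inr (Or.inr ⟨v, (Finset.mem_filter.1 hv1).2, u, e, he, rfl⟩)
  have hSedge : S ⊆ (G □ T).edgeSet := by
    intro g hg
    rw [hSdef, Finset.mem_coe] at hg
    rcases hSFmem g hg with ⟨f, hf, rfl⟩ | ⟨w, f, hf, rfl⟩ | ⟨v, _, u, e, he, rfl⟩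
    · exact emb_edge G T ρ (hAperc.1 hf)
    · exact emb_edge G T w (hBperc.1 hf)
    · exact col_edge G T v (hpooledge u e (hFsub v u he)).1
  have hperc : Percolates (G □ T) r S := by
    refine ⟨hSedge, ?_⟩
    intro e he
    induction e using Sym2.ind with
    | _ x y =>
      obtain ⟨a, c⟩ := x
      obtain ⟨b, d⟩ := y
      have hadj := (G □ T).mem_edgeSet.1 he
      rcases SimpleGraph.boxProd_adj.1 hadj with ⟨hG, h2⟩ | ⟨hTa, h1⟩
      · simp only at h2
        subst h2
        have : (s((a, c), (b, c)) : Sym2 (V × W)) = (s(a, b) : Sym2 V).map (fun v => (v, c)) := by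
          rw [Sym2.map_pair_eq]
        rw [this]
        exact (key (dep c) c le_rfl).2 s(a, b) (G.mem_edgeSet.2 hG)
      · simp only at h1
        subst h1
        simp only at hTa
        rcases hpedge c d hTa with hcd | hdc
        · have hcρ : c ≠ ρ := by
            intro hc
            subst hc
            rw [hparρ] at hcd
            exact hTa.ne hcd
          have := (key (dep c) c le_rfl).1 hcρ a
          rw [hcd] at this
          have heq : (s((a, c), (a, d)) : Sym2 (V × W)) =
              Sym2.map (fun x => (a, x)) s(c, d) := by
            rw [Sym2.map_pair_eq]
          rw [heq]
          exact this
        · have hdρ : d ≠ ρ := by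
            intro hd
            subst hd
            rw [hparρ] at hdc
            exact hTa.ne' hdc
          have := (key (dep d) d le_rfl).1 hdρ a
          rw [hdc] at this
          have heq : (s((a, c), (a, d)) : Sym2 (V × W)) =
              Sym2.map (fun x => (a, x)) s(d, c) := by
            rw [Sym2.map_pair_eq, Sym2.eq_swap]
          rw [heq]
          exact this
  -- the size bound
  have hle : me (G □ T) r ≤ SF.card := by
    apply Nat.sInf_le
    exact ⟨S, Set.toFinite _, hperc, by rw [hSdef, Set.ncard_coe_finset]⟩
  have hcard : SF.card ≤ me G r + (Fintype.card W - 1) * me G (r - 1) +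
      ∑ v ∈ lowF, ∑ u : W, target v u := by
    refine le_trans (Finset.card_union_le _ _) ?_
    refine Nat.add_le_add (le_trans (Finset.card_union_le _ _) (Nat.add_le_add ?_ ?_)) ?_
    · refine le_trans Finset.card_image_le ?_
      rw [← hAcard, Set.ncard_eq_toFinset_card _ hAfin]
    · refine le_trans (Finset.card_biUnion_le) ?_
      have h1 : ∀ w ∈ Finset.univ.erase ρ,
          (hBfin.toFinset.image (Sym2.map (fun a : V => (a, w)))).card ≤ me G (r - 1) := by
        intro w _
        refine le_trans Finset.card_image_le ?_
        rw [← hBcard, Set.ncard_eq_toFinset_card _ hBfin]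
      refine le_trans (Finset.sum_le_sum h1) ?_
      rw [Finset.sum_const, smul_eq_mul, Finset.card_erase_of_mem (Finset.mem_univ ρ),
        Finset.card_univ]
    · refine le_trans (Finset.card_biUnion_le) ?_
      refine Finset.sum_le_sum ?_
      intro v _
      refine le_trans (Finset.card_biUnion_le) ?_
      refine Finset.sum_le_sum ?_
      intro u _
      refine le_trans Finset.card_image_le ?_
      rw [hFcard]
  have hcol : ∑ v ∈ lowF, ∑ u : W, target v u =
      dcount G ((r : ℤ) - 1) + ∑ t ∈ Finset.Icc 1 (r - 1), dcount G ((r : ℤ) - 1 - t) *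
        (1 + t * (∑ i ∈ Finset.Icc (t + 1) T.maxDegree, dcount T (i : ℤ)) +
          ∑ i ∈ Finset.Icc 2 t, (i - 1) * dcount T (i : ℤ)) := by
    set ct : ℕ → ℕ := fun t =>
      1 + t * (∑ i ∈ Finset.Icc (t + 1) T.maxDegree, dcount T (i : ℤ)) +
        ∑ i ∈ Finset.Icc 2 t, (i - 1) * dcount T (i : ℤ) with hct
    have hperV : ∀ v ∈ lowF, ∑ u : W, target v u = ct (r - 1 - G.degree v) := by
      intro v hv
      rw [hlowF] at hv
      have hvlow : G.degree v < r := (Finset.mem_filter.1 hv).2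
      have hsv : s v = (r - 1 - G.degree v) + 1 := by rw [hsval]; omega
      have h1 : ∀ u : W, target v u =
          (min (s v) (T.degree u) - 1) + (if u = ρ then 1 else 0) := by
        intro u
        simp only [htarget]
        by_cases hu : u = ρ
        · rw [if_pos hu, if_pos hu]
          have : 1 ≤ min (s v) (T.degree u) := le_min (by rw [hsval]; omega) (hTdeg u)
          omega
        · rw [if_neg hu, if_neg hu, Nat.add_zero]
      rw [Finset.sum_congr rfl (fun u _ => h1 u), Finset.sum_add_distrib,
        Finset.sum_ite_eq' Finset.univ ρ (fun _ => 1), if_pos (Finset.mem_univ ρ)]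
      have h2 : ∀ u : W, min (s v) (T.degree u) - 1 =
          min ((r - 1 - G.degree v) + 1) (T.degree u) - 1 := by
        intro u; rw [hsv]
      rw [Finset.sum_congr rfl (fun u _ => h2 u), sum_min_deg T (r - 1 - G.degree v), hct]
      ring
    rw [Finset.sum_congr rfl hperV]
    have hfib : ∑ v ∈ lowF, ct (r - 1 - G.degree v) =
        ∑ t ∈ Finset.Icc 0 (r - 1), dcount G ((r : ℤ) - 1 - t) * ct t := by
      rw [← Finset.sum_fiberwise_of_maps_to'
        (g := fun v => r - 1 - G.degree v) (t := Finset.Icc 0 (r - 1))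
        (fun v _ => Finset.mem_Icc.2 ⟨Nat.zero_le _, Nat.sub_le _ _⟩) ct]
      refine Finset.sum_congr rfl fun t ht => ?_
      rw [Finset.sum_const, smul_eq_mul]
      congr 1
      rw [Finset.mem_Icc] at ht
      have hcast : (r : ℤ) - 1 - t = ((r - 1 - t : ℕ) : ℤ) := by push_cast; omega
      rw [hcast, dcount_nat]
      congr 1
      ext v
      simp only [hlowF, Finset.mem_filter, Finset.mem_univ, true_and]
      omega
    rw [hfib]
    have hsplit : Finset.Icc 0 (r - 1) = insert 0 (Finset.Icc 1 (r - 1)) := by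
      ext i
      simp only [Finset.mem_Icc, Finset.mem_insert]
      omega
    rw [hsplit, Finset.sum_insert (by simp)]
    have hct0 : ct 0 = 1 := by
      rw [hct]
      simp
    rw [hct0, Nat.mul_one]
    congr 1
    simp
  calc me (G □ T) r ≤ SF.card := hle
    _ ≤ me G r + (Fintype.card W - 1) * me G (r - 1) + ∑ v ∈ lowF, ∑ u : W, target v u :=
        hcard
    _ = _ := by rw [hcol, ← Nat.add_assoc]


end BondPerc
end

section
/- Upper bound for products with theta graphs: for integers r > 1 and k ≥ ℓ ≥ 4 and any graph G, m_e(G□H_{k,ℓ}, r) ≤ m_e(G,r) + (k+ℓ−5)·m_e(G,r−1) + 2·m_e(G,r−2) + d^G_{r−1} + (k+ℓ−3)·d^G_{r−2} + (k+ℓ−1)·Σ_{t=0}^{r−3} d^G_t. -/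
open Polynomial

namespace BondPerc

open Classical

set_option maxHeartbeats 1000000

section Infrastructure

variable {V W : Type*}

theorem infected_mono {G : SimpleGraph V} {r : ℕ} {S S' : Set (Sym2 V)}
    (hss : S ⊆ S') {e : Sym2 V} (he : Infected G r S e) : Infected G r S' e := by
  induction he with
  | init h => exact .init (hss h)
  | step he v hv T hT hT1 hT2 _ ih => exact .step he v hv T hT hT1 hT2 ih

theorem mapEdge_mem {G : SimpleGraph V} {P : SimpleGraph W} {φ : V → W}
    (hadj : ∀ u v, G.Adj u v → P.Adj (φ u) (φ v)) {e : Sym2 V}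
    (he : e ∈ G.edgeSet) : e.map φ ∈ P.edgeSet := by
  induction e with
  | _ u v => simpa using hadj u v he

theorem mem_mapEdge {φ : V → W} {e : Sym2 V} {v : V} (hv : v ∈ e) : φ v ∈ e.map φ :=
  Sym2.mem_map.2 ⟨v, hv, rfl⟩

/-- If an edge contains a point not in the range condition, it's not a mapped edge. -/
theorem ne_mapEdge {φ : V → W} {f : Sym2 W} {x : W} (hx : x ∈ f)
    (hne : ∀ v : V, φ v ≠ x) (e : Sym2 V) : f ≠ e.map φ := by
  rintro rfl
  obtain ⟨v, -, hv⟩ := Sym2.mem_map.1 hx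
  exact hne v hv

theorem degree_pos_of_mem_edge [Fintype V] {G : SimpleGraph V} {e : Sym2 V}
    (he : e ∈ G.edgeSet) {v : V} (hv : v ∈ e) : 1 ≤ G.degree v := by
  induction e with
  | _ u w =>
    have hadj : G.Adj u w := he
    rcases Sym2.mem_iff.1 hv with rfl | rfl
    · exact (G.degree_pos_iff_exists_adj v).2 ⟨w, hadj⟩
    · exact (G.degree_pos_iff_exists_adj v).2 ⟨u, hadj.symm⟩

/-- Simulation lemma: an `r'`-infection in `G` yields an `r`-infection of the
image edges in `P`, provided each potential pivot has `r - r'` extra infected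
edges at its image. -/
theorem infected_sim [Fintype V] {G : SimpleGraph V} {P : SimpleGraph W}
    {φ : V → W} (hφ : Function.Injective φ)
    (hadj : ∀ u v, G.Adj u v → P.Adj (φ u) (φ v))
    {r r' : ℕ} (hrr : r' ≤ r) {S : Set (Sym2 V)} {T : Set (Sym2 W)}
    (hS : ∀ e ∈ S, Infected P r T (e.map φ))
    (hcross : ∀ v : V, 1 ≤ G.degree v → r' ≤ G.degree v →
      ∃ C : Finset (Sym2 W), r - r' ≤ C.card ∧
        ∀ f ∈ C, f ∈ P.edgeSet ∧ φ v ∈ f ∧ Infected P r T f ∧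
          ∀ e' : Sym2 V, f ≠ e'.map φ)
    {e : Sym2 V} (he : Infected G r' S e) : Infected P r T (e.map φ) := by
  induction he with
  | init h => exact hS _ h
  | step heE v hv TG hTG hTG1 hTG2 _ ih =>
    -- degree bound for v
    have hsub : TG ⊆ G.incidenceFinset v := by
      intro f hf
      rw [SimpleGraph.mem_incidenceFinset]
      exact ⟨hTG1 f hf, hTG2 f hf⟩
    have hdeg : TG.card ≤ G.degree v := by
      simpa [SimpleGraph.card_incidenceFinset_eq_degree] using Finset.card_le_card hsub
    have hdeg1 : 1 ≤ G.degree v := degree_pos_of_mem_edge heE hv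
    obtain ⟨C, hCcard, hC⟩ := hcross v hdeg1 (le_trans hTG hdeg)
    refine .step (mapEdge_mem hadj heE) (φ v) (mem_mapEdge hv)
      (TG.image (Sym2.map φ) ∪ C) ?_ ?_ ?_ ?_
    · have hdisj : Disjoint (TG.image (Sym2.map φ)) C := by
        rw [Finset.disjoint_left]
        intro f hf' hf
        obtain ⟨g, hg, rfl⟩ := Finset.mem_image.1 hf'
        exact (hC _ hf).2.2.2 g rfl
      rw [Finset.card_union_of_disjoint hdisj,
        Finset.card_image_of_injective _ (Sym2.map.injective hφ)]
      omega
    · intro f hf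
      rcases Finset.mem_union.1 hf with hf | hf
      · obtain ⟨g, hg, rfl⟩ := Finset.mem_image.1 hf
        exact mapEdge_mem hadj (hTG1 g hg)
      · exact (hC f hf).1
    · intro f hf
      rcases Finset.mem_union.1 hf with hf | hf
      · obtain ⟨g, hg, rfl⟩ := Finset.mem_image.1 hf
        exact mem_mapEdge (hTG2 g hg)
      · exact (hC f hf).2.1
    · intro f hf
      rcases Finset.mem_union.1 hf with hf | hf
      · obtain ⟨g, hg, rfl⟩ := Finset.mem_image.1 hf
        exact ih g hg
      · exact (hC f hf).2.2.1

end Infrastructure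


section Cross

variable {V VH : Type*} [Fintype V] {G : SimpleGraph V} {H : SimpleGraph VH}

/-- The layer embedding `v ↦ (v, h)`. -/
abbrev layMap (h : VH) : V → V × VH := fun v => (v, h)

theorem layMap_injective (h : VH) : Function.Injective (layMap (V := V) h) :=
  fun _ _ hh => congrArg Prod.fst hh

theorem layMap_adj {h : VH} {u w : V} (huw : G.Adj u w) :
    (G □ H).Adj (layMap h u) (layMap h w) := SimpleGraph.boxProd_adj_left.2 huw

theorem cross_mem_edgeSet {v : V} {h h' : VH} (hadj : H.Adj h h') :
    s((v, h), (v, h')) ∈ (G □ H).edgeSet :=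
  (SimpleGraph.mem_edgeSet _).2 (SimpleGraph.boxProd_adj_right.2 hadj)

/-- Infect a cross edge at `(v, h)` from a fully infected layer `h` together with
`F.card` many already-infected cross edges. -/
theorem cross_infect {r : ℕ} {T : Set (Sym2 (V × VH))} {v : V} {h : VH}
    (hlayer : ∀ e ∈ G.edgeSet, v ∈ e → Infected (G □ H) r T (e.map (layMap h)))
    (F : Finset VH)
    (hF : ∀ h'' ∈ F, h'' ≠ h ∧ H.Adj h h'' ∧ Infected (G □ H) r T s((v, h), (v, h'')))
    (hcard : r ≤ G.degree v + F.card)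
    {h' : VH} (hadj : H.Adj h h') : Infected (G □ H) r T s((v, h), (v, h')) := by
  classical
  refine .step (cross_mem_edgeSet hadj) (v, h) (Sym2.mem_mk_left _ _)
    ((G.incidenceFinset v).image (Sym2.map (layMap h)) ∪
      F.image (fun h'' => s((v, h), (v, h'')))) ?_ ?_ ?_ ?_
  · have hdisj : Disjoint ((G.incidenceFinset v).image (Sym2.map (layMap h)))
        (F.image (fun h'' => s((v, h), (v, h'')))) := by
      rw [Finset.disjoint_right]
      intro f hf hf'
      obtain ⟨h'', hh'', rfl⟩ := Finset.mem_image.1 hf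
      obtain ⟨g, hg, hgf⟩ := Finset.mem_image.1 hf'
      exact ne_mapEdge (Sym2.mem_mk_right _ _)
        (fun w hw => ((hF h'' hh'').1 (congrArg Prod.snd hw.symm)).elim) g hgf.symm
    rw [Finset.card_union_of_disjoint hdisj,
      Finset.card_image_of_injective _ (Sym2.map.injective (layMap_injective h)),
      SimpleGraph.card_incidenceFinset_eq_degree,
      Finset.card_image_of_injOn]
    · exact hcard
    · intro a ha b hb hab
      rw [Sym2.congr_right] at hab
      exact congrArg Prod.snd hab
  · intro f hf
    rcases Finset.mem_union.1 hf with hf | hf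
    · obtain ⟨g, hg, rfl⟩ := Finset.mem_image.1 hf
      exact mapEdge_mem (fun _ _ => layMap_adj) ((G.mem_incidenceFinset (v := v) g).1 hg).1
    · obtain ⟨h'', hh'', rfl⟩ := Finset.mem_image.1 hf
      exact cross_mem_edgeSet (hF h'' hh'').2.1
  · intro f hf
    rcases Finset.mem_union.1 hf with hf | hf
    · obtain ⟨g, hg, rfl⟩ := Finset.mem_image.1 hf
      exact mem_mapEdge ((G.mem_incidenceFinset (v := v) g).1 hg).2
    · obtain ⟨h'', hh'', rfl⟩ := Finset.mem_image.1 hf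
      exact Sym2.mem_mk_left _ _
  · intro f hf
    rcases Finset.mem_union.1 hf with hf | hf
    · obtain ⟨g, hg, rfl⟩ := Finset.mem_image.1 hf
      exact hlayer g ((G.mem_incidenceFinset (v := v) g).1 hg).1 ((G.mem_incidenceFinset (v := v) g).1 hg).2
    · obtain ⟨h'', hh'', rfl⟩ := Finset.mem_image.1 hf
      exact (hF h'' hh'').2.2

end Cross


section Theta

set_option linter.unusedSectionVars false

/-- Vertex names in the theta graph. -/
def va {k l : ℕ} : Fin 2 ⊕ Fin (l - 2) ⊕ Fin (k - 2) := Sum.inl 0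

def vb {k l : ℕ} : Fin 2 ⊕ Fin (l - 2) ⊕ Fin (k - 2) := Sum.inl 1

def vp {k l : ℕ} (j : ℕ) (hj : j < l - 2) : Fin 2 ⊕ Fin (l - 2) ⊕ Fin (k - 2) :=
  Sum.inr (Sum.inl ⟨j, hj⟩)

def vq {k l : ℕ} (j : ℕ) (hj : j < k - 2) : Fin 2 ⊕ Fin (l - 2) ⊕ Fin (k - 2) :=
  Sum.inr (Sum.inr ⟨j, hj⟩)

variable {k l : ℕ}

@[simp] theorem va_ne_vb : (va : Fin 2 ⊕ Fin (l-2) ⊕ Fin (k-2)) ≠ vb := by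
  simp [va, vb, Fin.ext_iff]

@[simp] theorem vp_ne_va {j hj} : (vp j hj : Fin 2 ⊕ Fin (l-2) ⊕ Fin (k-2)) ≠ va := by
  simp [va, vp]

@[simp] theorem vp_ne_vb {j hj} : (vp j hj : Fin 2 ⊕ Fin (l-2) ⊕ Fin (k-2)) ≠ vb := by
  simp [vb, vp]

@[simp] theorem vq_ne_va {j hj} : (vq j hj : Fin 2 ⊕ Fin (l-2) ⊕ Fin (k-2)) ≠ va := by
  simp [va, vq]

@[simp] theorem vq_ne_vb {j hj} : (vq j hj : Fin 2 ⊕ Fin (l-2) ⊕ Fin (k-2)) ≠ vb := by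
  simp [vb, vq]

@[simp] theorem vq_ne_vp {i hi j hj} :
    (vq i hi : Fin 2 ⊕ Fin (l-2) ⊕ Fin (k-2)) ≠ vp j hj := by
  simp [vp, vq]

@[simp] theorem vp_inj {i hi j hj} :
    (vp i hi : Fin 2 ⊕ Fin (l-2) ⊕ Fin (k-2)) = vp j hj ↔ i = j := by
  simp [vp, Fin.ext_iff]

@[simp] theorem vq_inj {i hi j hj} :
    (vq i hi : Fin 2 ⊕ Fin (l-2) ⊕ Fin (k-2)) = vq j hj ↔ i = j := by
  simp [vq, Fin.ext_iff]

theorem theta_adj_ab : (thetaGraph k l).Adj va vb := by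
  rw [thetaGraph, SimpleGraph.fromRel_adj]
  exact ⟨va_ne_vb, Or.inl (Or.inl ⟨rfl, rfl⟩)⟩

theorem theta_adj_ap0 (h0 : 0 < l - 2) : (thetaGraph k l).Adj va (vp 0 h0) := by
  rw [thetaGraph, SimpleGraph.fromRel_adj]
  exact ⟨(vp_ne_va).symm, Or.inl (Or.inr (Or.inl ⟨rfl, ⟨0, h0⟩, rfl, rfl⟩))⟩

theorem theta_adj_pp {j : ℕ} (hj : j < l - 2) (hj1 : j + 1 < l - 2) :
    (thetaGraph k l).Adj (vp j hj) (vp (j + 1) hj1) := by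
  rw [thetaGraph, SimpleGraph.fromRel_adj]
  refine ⟨by simp, Or.inl (Or.inr (Or.inr (Or.inl ⟨⟨j, hj⟩, ⟨j+1, hj1⟩, rfl, rfl, rfl⟩)))⟩

theorem theta_adj_pb (h3 : l - 3 < l - 2) :
    (thetaGraph k l).Adj (vp (l - 3) h3) vb := by
  rw [thetaGraph, SimpleGraph.fromRel_adj]
  exact ⟨vp_ne_vb, Or.inl (Or.inr (Or.inr (Or.inr (Or.inl ⟨⟨l-3, h3⟩, rfl, rfl, rfl⟩))))⟩

theorem theta_adj_aq0 (h0 : 0 < k - 2) : (thetaGraph k l).Adj va (vq 0 h0) := by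
  rw [thetaGraph, SimpleGraph.fromRel_adj]
  exact ⟨(vq_ne_va).symm,
    Or.inl (Or.inr (Or.inr (Or.inr (Or.inr (Or.inl ⟨rfl, ⟨0, h0⟩, rfl, rfl⟩)))))⟩

theorem theta_adj_qq {j : ℕ} (hj : j < k - 2) (hj1 : j + 1 < k - 2) :
    (thetaGraph k l).Adj (vq j hj) (vq (j + 1) hj1) := by
  rw [thetaGraph, SimpleGraph.fromRel_adj]
  refine ⟨by simp, Or.inl (Or.inr (Or.inr (Or.inr (Or.inr (Or.inr (Or.inl
    ⟨⟨j, hj⟩, ⟨j+1, hj1⟩, rfl, rfl, rfl⟩))))))⟩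

theorem theta_adj_qb (h3 : k - 3 < k - 2) :
    (thetaGraph k l).Adj (vq (k - 3) h3) vb := by
  rw [thetaGraph, SimpleGraph.fromRel_adj]
  exact ⟨vq_ne_vb, Or.inl (Or.inr (Or.inr (Or.inr (Or.inr (Or.inr (Or.inr
    ⟨⟨k-3, h3⟩, rfl, rfl, rfl⟩))))))⟩

/-- The possible shapes of an (oriented) theta-graph edge. -/
def EdgeShape (k l : ℕ) (x y : Fin 2 ⊕ Fin (l - 2) ⊕ Fin (k - 2)) : Prop :=
  (x = va ∧ y = vb) ∨
  (∃ h0 : 0 < l - 2, x = va ∧ y = vp 0 h0) ∨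
  (∃ (j : ℕ) (hj : j < l - 2) (hj1 : j + 1 < l - 2), x = vp j hj ∧ y = vp (j+1) hj1) ∨
  (∃ h3 : l - 3 < l - 2, x = vp (l - 3) h3 ∧ y = vb) ∨
  (∃ h0 : 0 < k - 2, x = va ∧ y = vq 0 h0) ∨
  (∃ (j : ℕ) (hj : j < k - 2) (hj1 : j + 1 < k - 2), x = vq j hj ∧ y = vq (j+1) hj1) ∨
  (∃ h3 : k - 3 < k - 2, x = vq (k - 3) h3 ∧ y = vb)

theorem theta_adj_elim (hl : 4 ≤ l) (hkl : l ≤ k) {x y : Fin 2 ⊕ Fin (l-2) ⊕ Fin (k-2)}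
    (h : (thetaGraph k l).Adj x y) : EdgeShape k l x y ∨ EdgeShape k l y x := by
  rw [thetaGraph, SimpleGraph.fromRel_adj] at h
  obtain ⟨hne, h | h⟩ := h
  · left
    rcases h with ⟨rfl, rfl⟩ | ⟨rfl, j, rfl, hj0⟩ | ⟨i, j, rfl, rfl, hij⟩ |
      ⟨i, rfl, hi, rfl⟩ | ⟨rfl, j, rfl, hj0⟩ | ⟨i, j, rfl, rfl, hij⟩ | ⟨i, rfl, hi, rfl⟩
    · exact Or.inl ⟨rfl, rfl⟩
    · refine Or.inr (Or.inl ⟨by omega, rfl, ?_⟩)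
      simp [vp, Fin.ext_iff, hj0]
    · refine Or.inr (Or.inr (Or.inl ⟨i.1, i.2, by omega, by simp [vp], ?_⟩))
      simp [vp, Fin.ext_iff, hij]
    · refine Or.inr (Or.inr (Or.inr (Or.inl ⟨by omega, ?_, rfl⟩)))
      simp [vp, Fin.ext_iff, hi]
    · refine Or.inr (Or.inr (Or.inr (Or.inr (Or.inl ⟨by omega, rfl, ?_⟩))))
      simp [vq, Fin.ext_iff, hj0]
    · refine Or.inr (Or.inr (Or.inr (Or.inr (Or.inr (Or.inl
        ⟨i.1, i.2, by omega, by simp [vq], ?_⟩)))))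
      simp [vq, Fin.ext_iff, hij]
    · refine Or.inr (Or.inr (Or.inr (Or.inr (Or.inr (Or.inr ⟨by omega, ?_, rfl⟩)))))
      simp [vq, Fin.ext_iff, hi]
  · right
    rcases h with ⟨rfl, rfl⟩ | ⟨rfl, j, rfl, hj0⟩ | ⟨i, j, rfl, rfl, hij⟩ |
      ⟨i, rfl, hi, rfl⟩ | ⟨rfl, j, rfl, hj0⟩ | ⟨i, j, rfl, rfl, hij⟩ | ⟨i, rfl, hi, rfl⟩
    · exact Or.inl ⟨rfl, rfl⟩
    · refine Or.inr (Or.inl ⟨by omega, rfl, ?_⟩)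
      simp [vp, Fin.ext_iff, hj0]
    · refine Or.inr (Or.inr (Or.inl ⟨i.1, i.2, by omega, by simp [vp], ?_⟩))
      simp [vp, Fin.ext_iff, hij]
    · refine Or.inr (Or.inr (Or.inr (Or.inl ⟨by omega, ?_, rfl⟩)))
      simp [vp, Fin.ext_iff, hi]
    · refine Or.inr (Or.inr (Or.inr (Or.inr (Or.inl ⟨by omega, rfl, ?_⟩))))
      simp [vq, Fin.ext_iff, hj0]
    · refine Or.inr (Or.inr (Or.inr (Or.inr (Or.inr (Or.inl
        ⟨i.1, i.2, by omega, by simp [vq], ?_⟩)))))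
      simp [vq, Fin.ext_iff, hij]
    · refine Or.inr (Or.inr (Or.inr (Or.inr (Or.inr (Or.inr ⟨by omega, ?_, rfl⟩)))))
      simp [vq, Fin.ext_iff, hi]

end Theta


section LayerStep

variable {V VH : Type*} [Fintype V] {G : SimpleGraph V} {H : SimpleGraph VH}

theorem cross_injOn {v : V} {h : VH} {C : Finset VH} (hC : ∀ h' ∈ C, h' ≠ h) :
    Set.InjOn (fun h' => s((v, h), (v, h'))) C := by
  intro a ha b hb hab
  simp only [Sym2.congr_right] at hab
  exact congrArg Prod.snd hab

/-- Percolate a layer: each pivot needs `r - r'` infected cross edges. -/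
theorem layer_step {r r' : ℕ} (hrr : r' ≤ r) {A : Set (Sym2 V)} (hA : Percolates G r' A)
    {T : Set (Sym2 (V × VH))} {h : VH}
    (hS : ∀ e ∈ A, Infected (G □ H) r T (Sym2.map (layMap h) e))
    (hcross : ∀ v : V, 1 ≤ G.degree v → r' ≤ G.degree v →
      ∃ C : Finset VH, r - r' ≤ C.card ∧
        ∀ h' ∈ C, h' ≠ h ∧ H.Adj h h' ∧ Infected (G □ H) r T s((v, h), (v, h'))) :
    ∀ e ∈ G.edgeSet, Infected (G □ H) r T (Sym2.map (layMap h) e) := by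
  classical
  intro e he
  refine infected_sim (layMap_injective h) (fun u w => layMap_adj) hrr hS ?_ (hA.2 e he)
  intro v h1 h2
  obtain ⟨C, hC1, hC2⟩ := hcross v h1 h2
  refine ⟨C.image (fun h' => s((v, h), (v, h'))), ?_, ?_⟩
  · rwa [Finset.card_image_of_injOn (cross_injOn (fun h' hh' => (hC2 h' hh').1))]
  · intro f hf
    obtain ⟨h', hh', rfl⟩ := Finset.mem_image.1 hf
    refine ⟨cross_mem_edgeSet (hC2 h' hh').2.1, Sym2.mem_mk_left _ _,
      (hC2 h' hh').2.2, fun e' => ?_⟩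
    exact ne_mapEdge (Sym2.mem_mk_right _ _)
      (fun w hw => ((hC2 h' hh').1 (congrArg Prod.snd hw).symm).elim) e'

end LayerStep

section ThetaTotal

variable {k l : ℕ}

/-- Total version of `vp`. -/
def vpt {k l : ℕ} (j : ℕ) : Fin 2 ⊕ Fin (l - 2) ⊕ Fin (k - 2) :=
  if h : j < l - 2 then vp j h else vb

/-- Total version of `vq`. -/
def vqt {k l : ℕ} (j : ℕ) : Fin 2 ⊕ Fin (l - 2) ⊕ Fin (k - 2) :=
  if h : j < k - 2 then vq j h else vb

theorem vpt_eq {j : ℕ} (h : j < l - 2) : (vpt j : Fin 2 ⊕ Fin (l-2) ⊕ Fin (k-2)) = vp j h :=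
  dif_pos h

theorem vqt_eq {j : ℕ} (h : j < k - 2) : (vqt j : Fin 2 ⊕ Fin (l-2) ⊕ Fin (k-2)) = vq j h :=
  dif_pos h


theorem vpt_ne_va {j : ℕ} (hj : j < l - 2) : (vpt j : Fin 2 ⊕ Fin (l-2) ⊕ Fin (k-2)) ≠ va := by
  rw [vpt_eq hj]; exact vp_ne_va

theorem vpt_ne_vb {j : ℕ} (hj : j < l - 2) : (vpt j : Fin 2 ⊕ Fin (l-2) ⊕ Fin (k-2)) ≠ vb := by
  rw [vpt_eq hj]; exact vp_ne_vb

theorem vqt_ne_va {j : ℕ} (hj : j < k - 2) : (vqt j : Fin 2 ⊕ Fin (l-2) ⊕ Fin (k-2)) ≠ va := by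
  rw [vqt_eq hj]; exact vq_ne_va

theorem vqt_ne_vb {j : ℕ} (hj : j < k - 2) : (vqt j : Fin 2 ⊕ Fin (l-2) ⊕ Fin (k-2)) ≠ vb := by
  rw [vqt_eq hj]; exact vq_ne_vb

theorem vqt_ne_vpt {i j : ℕ} (hi : i < k - 2) (hj : j < l - 2) :
    (vqt i : Fin 2 ⊕ Fin (l-2) ⊕ Fin (k-2)) ≠ vpt j := by
  rw [vqt_eq hi, vpt_eq hj]; exact vq_ne_vp

theorem vpt_inj {i j : ℕ} (hi : i < l - 2) (hj : j < l - 2) :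
    (vpt i : Fin 2 ⊕ Fin (l-2) ⊕ Fin (k-2)) = vpt j ↔ i = j := by
  rw [vpt_eq hi, vpt_eq hj, vp_inj]

theorem vqt_inj {i j : ℕ} (hi : i < k - 2) (hj : j < k - 2) :
    (vqt i : Fin 2 ⊕ Fin (l-2) ⊕ Fin (k-2)) = vqt j ↔ i = j := by
  rw [vqt_eq hi, vqt_eq hj, vq_inj]

theorem theta_adj_ap0' (h0 : 0 < l - 2) : (thetaGraph k l).Adj va (vpt 0) := by
  rw [vpt_eq h0]; exact theta_adj_ap0 h0

theorem theta_adj_pp' {j : ℕ} (hj1 : j + 1 < l - 2) :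
    (thetaGraph k l).Adj (vpt j) (vpt (j + 1)) := by
  rw [vpt_eq (by omega : j < l - 2), vpt_eq hj1]; exact theta_adj_pp _ hj1

theorem theta_adj_pb' (h3 : l - 3 < l - 2) : (thetaGraph k l).Adj (vpt (l - 3)) vb := by
  rw [vpt_eq h3]; exact theta_adj_pb h3

theorem theta_adj_aq0' (h0 : 0 < k - 2) : (thetaGraph k l).Adj va (vqt 0) := by
  rw [vqt_eq h0]; exact theta_adj_aq0 h0

theorem theta_adj_qq' {j : ℕ} (hj1 : j + 1 < k - 2) :
    (thetaGraph k l).Adj (vqt j) (vqt (j + 1)) := by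
  rw [vqt_eq (by omega : j < k - 2), vqt_eq hj1]; exact theta_adj_qq _ hj1

theorem theta_adj_qb' (h3 : k - 3 < k - 2) : (thetaGraph k l).Adj (vqt (k - 3)) vb := by
  rw [vqt_eq h3]; exact theta_adj_qb h3

end ThetaTotal



section Construction

set_option linter.unusedSectionVars false

variable (k l : ℕ) {V : Type*} [Fintype V] (G : SimpleGraph V) (r : ℕ)

/-- The fibre edges used for a vertex of degree `r - 2` (`k + ℓ - 3` of them). -/
noncomputable def fib2 (v : V) : Finset (Sym2 (V × (Fin 2 ⊕ Fin (l - 2) ⊕ Fin (k - 2)))) :=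
  ({s((v, va), (v, vb)), s((v, va), (v, vqt 0)), s((v, vb), (v, vqt (k - 3)))} : Finset _)
  ∪ (Finset.range (l - 3)).image (fun j => s((v, vpt j), (v, vpt (j + 1))))
  ∪ (Finset.range (k - 3)).image (fun j => s((v, vqt j), (v, vqt (j + 1))))

/-- All fibre edges of a vertex (`k + ℓ - 1` of them). -/
noncomputable def fib3 (v : V) : Finset (Sym2 (V × (Fin 2 ⊕ Fin (l - 2) ⊕ Fin (k - 2)))) :=
  fib2 k l v ∪ ({s((v, va), (v, vpt 0)), s((v, vb), (v, vpt (l - 3)))} : Finset _)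

/-- The initially infected set for the product construction. -/
noncomputable def bigSet (A₀ A₁ A₂ : Finset (Sym2 V)) :
    Finset (Sym2 (V × (Fin 2 ⊕ Fin (l - 2) ⊕ Fin (k - 2)))) :=
  A₀.image (Sym2.map (layMap va))
  ∪ A₁.image (Sym2.map (layMap vb))
  ∪ (Finset.range (l - 3)).biUnion (fun j => A₁.image (Sym2.map (layMap (vpt j))))
  ∪ (Finset.range (k - 3)).biUnion (fun j => A₁.image (Sym2.map (layMap (vqt j))))
  ∪ A₂.image (Sym2.map (layMap (vpt (l - 3))))
  ∪ A₂.image (Sym2.map (layMap (vqt (k - 3))))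
  ∪ (Finset.univ.filter (fun v => G.degree v + 1 = r)).image (fun v => s((v, va), (v, vb)))
  ∪ (Finset.univ.filter (fun v => G.degree v + 2 = r)).biUnion (fun v => fib2 k l v)
  ∪ (Finset.univ.filter (fun v => G.degree v + 3 ≤ r)).biUnion (fun v => fib3 k l v)

variable {k l r} {A₀ A₁ A₂ : Finset (Sym2 V)}

theorem mem_bigSet_a {e : Sym2 V} (he : e ∈ A₀) :
    Sym2.map (layMap va) e ∈ bigSet k l G r A₀ A₁ A₂ := by
  simp only [bigSet, Finset.mem_union]
  exact Or.inl (Or.inl (Or.inl (Or.inl (Or.inl (Or.inl (Or.inl (Or.inl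
    (Finset.mem_image_of_mem _ he))))))))

theorem mem_bigSet_b {e : Sym2 V} (he : e ∈ A₁) :
    Sym2.map (layMap vb) e ∈ bigSet k l G r A₀ A₁ A₂ := by
  simp only [bigSet, Finset.mem_union]
  exact Or.inl (Or.inl (Or.inl (Or.inl (Or.inl (Or.inl (Or.inl (Or.inr
    (Finset.mem_image_of_mem _ he))))))))

theorem mem_bigSet_p {j : ℕ} (hj : j < l - 3) {e : Sym2 V} (he : e ∈ A₁) :
    Sym2.map (layMap (vpt (k := k) j)) e ∈ bigSet k l G r A₀ A₁ A₂ := by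
  simp only [bigSet, Finset.mem_union, Finset.mem_biUnion]
  exact Or.inl (Or.inl (Or.inl (Or.inl (Or.inl (Or.inl (Or.inr
    ⟨j, Finset.mem_range.2 hj, Finset.mem_image_of_mem _ he⟩))))))

theorem mem_bigSet_q {j : ℕ} (hj : j < k - 3) {e : Sym2 V} (he : e ∈ A₁) :
    Sym2.map (layMap (vqt (l := l) j)) e ∈ bigSet k l G r A₀ A₁ A₂ := by
  simp only [bigSet, Finset.mem_union, Finset.mem_biUnion]
  exact Or.inl (Or.inl (Or.inl (Or.inl (Or.inl (Or.inr
    ⟨j, Finset.mem_range.2 hj, Finset.mem_image_of_mem _ he⟩)))))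

theorem mem_bigSet_plast {e : Sym2 V} (he : e ∈ A₂) :
    Sym2.map (layMap (vpt (k := k) (l - 3))) e ∈ bigSet k l G r A₀ A₁ A₂ := by
  simp only [bigSet, Finset.mem_union]
  exact Or.inl (Or.inl (Or.inl (Or.inl (Or.inr (Finset.mem_image_of_mem _ he)))))

theorem mem_bigSet_qlast {e : Sym2 V} (he : e ∈ A₂) :
    Sym2.map (layMap (vqt (l := l) (k - 3))) e ∈ bigSet k l G r A₀ A₁ A₂ := by
  simp only [bigSet, Finset.mem_union]
  exact Or.inl (Or.inl (Or.inl (Or.inr (Finset.mem_image_of_mem _ he))))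

theorem mem_bigSet_d1 {v : V} (hv : G.degree v + 1 = r) :
    s((v, va), (v, vb)) ∈ bigSet k l G r A₀ A₁ A₂ := by
  simp only [bigSet, Finset.mem_union]
  exact Or.inl (Or.inl (Or.inr (Finset.mem_image_of_mem _
    (Finset.mem_filter.2 ⟨Finset.mem_univ v, hv⟩))))

theorem mem_bigSet_d2 {v : V} (hv : G.degree v + 2 = r) {f} (hf : f ∈ fib2 k l v) :
    f ∈ bigSet k l G r A₀ A₁ A₂ := by
  simp only [bigSet, Finset.mem_union, Finset.mem_biUnion]
  exact Or.inl (Or.inr ⟨v, Finset.mem_filter.2 ⟨Finset.mem_univ v, hv⟩, hf⟩)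

theorem mem_bigSet_d3 {v : V} (hv : G.degree v + 3 ≤ r) {f} (hf : f ∈ fib3 k l v) :
    f ∈ bigSet k l G r A₀ A₁ A₂ := by
  simp only [bigSet, Finset.mem_union, Finset.mem_biUnion]
  exact Or.inr ⟨v, Finset.mem_filter.2 ⟨Finset.mem_univ v, hv⟩, hf⟩

-- fibre membership lemmas
theorem mem_fib2_ab (v : V) : s((v, va), (v, vb)) ∈ fib2 k l v := by
  simp [fib2]

theorem mem_fib2_aq0 (v : V) : s((v, va), (v, vqt 0)) ∈ fib2 k l v := by
  simp [fib2]

theorem mem_fib2_bqlast (v : V) : s((v, vb), (v, vqt (k - 3))) ∈ fib2 k l v := by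
  simp [fib2]

theorem mem_fib2_pp (v : V) {j : ℕ} (hj : j < l - 3) :
    s((v, vpt (k := k) j), (v, vpt (j + 1))) ∈ fib2 k l v := by
  simp only [fib2, Finset.mem_union, Finset.mem_image, Finset.mem_range]
  exact Or.inl (Or.inr ⟨j, hj, rfl⟩)

theorem mem_fib2_qq (v : V) {j : ℕ} (hj : j < k - 3) :
    s((v, vqt (l := l) j), (v, vqt (j + 1))) ∈ fib2 k l v := by
  simp only [fib2, Finset.mem_union, Finset.mem_image, Finset.mem_range]
  exact Or.inr ⟨j, hj, rfl⟩

theorem fib2_subset_fib3 (v : V) : fib2 k l v ⊆ fib3 k l v :=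
  Finset.subset_union_left

theorem mem_fib3_ap0 (v : V) : s((v, va), (v, vpt 0)) ∈ fib3 k l v := by
  simp [fib3]

theorem mem_fib3_bplast (v : V) : s((v, vb), (v, vpt (l - 3))) ∈ fib3 k l v := by
  simp [fib3]


theorem fib2_subset_edgeSet (hl : 4 ≤ l) (hkl : l ≤ k) (v : V) :
    ∀ f ∈ fib2 k l v, f ∈ (G □ thetaGraph k l).edgeSet := by
  intro f hf
  simp only [fib2, Finset.mem_union, Finset.mem_insert, Finset.mem_singleton,
    Finset.mem_image, Finset.mem_range] at hf
  rcases hf with ((rfl | rfl | rfl) | ⟨j, hj, rfl⟩) | ⟨j, hj, rfl⟩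
  · exact cross_mem_edgeSet theta_adj_ab
  · exact cross_mem_edgeSet (theta_adj_aq0' (by omega))
  · exact cross_mem_edgeSet (theta_adj_qb' (by omega)).symm
  · exact cross_mem_edgeSet (theta_adj_pp' (by omega))
  · exact cross_mem_edgeSet (theta_adj_qq' (by omega))

theorem fib3_subset_edgeSet (hl : 4 ≤ l) (hkl : l ≤ k) (v : V) :
    ∀ f ∈ fib3 k l v, f ∈ (G □ thetaGraph k l).edgeSet := by
  intro f hf
  simp only [fib3, Finset.mem_union, Finset.mem_insert, Finset.mem_singleton] at hf
  rcases hf with hf | rfl | rfl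
  · exact fib2_subset_edgeSet (G := G) hl hkl v f hf
  · exact cross_mem_edgeSet (theta_adj_ap0' (by omega))
  · exact cross_mem_edgeSet (theta_adj_pb' (by omega)).symm

end Construction



section Percolation

set_option linter.unusedSectionVars false
set_option maxHeartbeats 2000000

variable {V : Type*} [Fintype V] {G : SimpleGraph V} {k l r : ℕ}
variable {A₀ A₁ A₂ : Finset (Sym2 V)}

theorem bigSet_percolates (hr : 1 < r) (hl : 4 ≤ l) (hkl : l ≤ k)
    (h₀ : Percolates G r ↑A₀) (h₁ : Percolates G (r - 1) ↑A₁)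
    (h₂ : Percolates G (r - 2) ↑A₂) :
    Percolates (G □ thetaGraph k l) r ↑(bigSet k l G r A₀ A₁ A₂) := by
  classical
  have h0l : 0 < l - 2 := by omega
  have h0k : 0 < k - 2 := by omega
  have hpl : l - 3 < l - 2 := by omega
  have hqk : k - 3 < k - 2 := by omega
  set T : Set (Sym2 (V × (Fin 2 ⊕ Fin (l - 2) ⊕ Fin (k - 2)))) :=
    ↑(bigSet k l G r A₀ A₁ A₂) with hT
  have ini : ∀ {f}, f ∈ bigSet k l G r A₀ A₁ A₂ →
      Infected (G □ thetaGraph k l) r T f := fun hf => .init (Finset.mem_coe.2 hf)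
  -- layer a
  have LDa : ∀ e ∈ G.edgeSet, Infected (G □ thetaGraph k l) r T
      (Sym2.map (layMap va) e) := by
    refine layer_step le_rfl h₀ (fun e he => ini (mem_bigSet_a G (Finset.mem_coe.1 he))) ?_
    intro v _ _
    exact ⟨∅, by simp, by simp⟩
  -- all cross edges out of layer a, for degree ≥ r - 1
  have crossA : ∀ v, r ≤ G.degree v + 1 → ∀ h', (thetaGraph k l).Adj va h' →
      Infected (G □ thetaGraph k l) r T s((v, va), (v, h')) := by
    intro v hv h' hadj
    rcases Nat.lt_or_ge (G.degree v) r with hlt | hge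
    · refine cross_infect (fun e he _ => LDa e he) {vb} ?_ (by simp; omega) hadj
      intro h'' hh''
      rw [Finset.mem_singleton] at hh''
      subst hh''
      exact ⟨fun hh => va_ne_vb hh.symm, theta_adj_ab, ini (mem_bigSet_d1 G (by omega))⟩
    · exact cross_infect (fun e he _ => LDa e he) ∅ (by simp) (by simp; omega) hadj
  -- layer b
  have LDb : ∀ e ∈ G.edgeSet, Infected (G □ thetaGraph k l) r T
      (Sym2.map (layMap vb) e) := by
    refine layer_step (by omega) h₁ (fun e he => ini (mem_bigSet_b G (Finset.mem_coe.1 he))) ?_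
    intro v h1 h2
    refine ⟨{va}, by simp; omega, ?_⟩
    intro h' hh'
    rw [Finset.mem_singleton] at hh'
    subst hh'
    refine ⟨fun hh => va_ne_vb hh, theta_adj_ab.symm, ?_⟩
    rw [Sym2.eq_swap]
    exact crossA v (by omega) vb theta_adj_ab
  -- cross edges out of layer b, for degree ≥ r - 2
  have crossB : ∀ v, r ≤ G.degree v + 2 → ∀ h', (thetaGraph k l).Adj vb h' →
      Infected (G □ thetaGraph k l) r T s((v, vb), (v, h')) := by
    intro v hv h' hadj
    rcases Nat.lt_or_ge (G.degree v + 1) r with hlt | hge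
    · -- degree v + 2 = r
      refine cross_infect (fun e he _ => LDb e he) {va, vqt (k - 3)} ?_ ?_ hadj
      · intro h'' hh''
        rcases Finset.mem_insert.1 hh'' with rfl | hh''
        · refine ⟨fun hh => va_ne_vb hh, theta_adj_ab.symm, ?_⟩
          rw [Sym2.eq_swap]
          exact ini (mem_bigSet_d2 G (by omega) (mem_fib2_ab _))
        · rw [Finset.mem_singleton] at hh''
          subst hh''
          exact ⟨vqt_ne_vb hqk, (theta_adj_qb' hqk).symm,
            ini (mem_bigSet_d2 G (by omega) (mem_fib2_bqlast _))⟩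
      · rw [Finset.card_pair (fun hh => vqt_ne_va hqk hh.symm)]
        omega
    · refine cross_infect (fun e he _ => LDb e he) {va} ?_ (by simp; omega) hadj
      intro h'' hh''
      rw [Finset.mem_singleton] at hh''
      subst hh''
      refine ⟨fun hh => va_ne_vb hh, theta_adj_ab.symm, ?_⟩
      rw [Sym2.eq_swap]
      exact crossA v (by omega) vb theta_adj_ab
  -- incoming cross edge to layer q0, for degree ≥ r - 2
  have crossAq0 : ∀ v, r ≤ G.degree v + 2 →
      Infected (G □ thetaGraph k l) r T s((v, va), (v, vqt 0)) := by
    intro v hv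
    rcases Nat.lt_or_ge (G.degree v + 1) r with hlt | hge
    · exact ini (mem_bigSet_d2 G (by omega) (mem_fib2_aq0 _))
    · exact crossA v hge _ (theta_adj_aq0' h0k)
  -- incoming cross edge to layer p0 (for the r-2 class, via fib3 it is absent;
  -- handled later). The p-chain:
  have chainP : ∀ j, j + 4 ≤ l →
      (∀ e ∈ G.edgeSet, Infected (G □ thetaGraph k l) r T
        (Sym2.map (layMap (vpt j)) e)) ∧
      (∀ v, r ≤ G.degree v + 1 → ∀ h', (thetaGraph k l).Adj (vpt j) h' →
        Infected (G □ thetaGraph k l) r T s((v, vpt j), (v, h'))) := by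
    intro j
    induction j with
    | zero =>
      intro hj4
      have hin : ∀ v, r ≤ G.degree v + 1 →
          Infected (G □ thetaGraph k l) r T s((v, vpt 0), (v, va)) := by
        intro v hv
        rw [Sym2.eq_swap]
        exact crossA v hv _ (theta_adj_ap0' h0l)
      have hF : ∀ v, r ≤ G.degree v + 1 → ∀ h'' ∈ ({va} : Finset _), h'' ≠ vpt (k := k) 0 ∧
          (thetaGraph k l).Adj (vpt 0) h'' ∧
          Infected (G □ thetaGraph k l) r T s((v, vpt 0), (v, h'')) := by
        intro v hv h'' hh''
        rw [Finset.mem_singleton] at hh''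
        subst hh''
        exact ⟨fun hh => vpt_ne_va h0l hh.symm, (theta_adj_ap0' h0l).symm, hin v hv⟩
      have LD0 : ∀ e ∈ G.edgeSet, Infected (G □ thetaGraph k l) r T
          (Sym2.map (layMap (vpt 0)) e) := by
        refine layer_step (by omega) h₁
          (fun e he => ini (mem_bigSet_p G (by omega) (Finset.mem_coe.1 he))) ?_
        intro v h1 h2
        exact ⟨{va}, by simp; omega, hF v (by omega)⟩
      refine ⟨LD0, fun v hv h' hadj => ?_⟩
      exact cross_infect (fun e he _ => LD0 e he) {va} (hF v hv) (by simp; omega) hadj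
    | succ j ih =>
      intro hj4
      obtain ⟨ihLD, ihout⟩ := ih (by omega)
      have hin : ∀ v, r ≤ G.degree v + 1 →
          Infected (G □ thetaGraph k l) r T s((v, vpt (j + 1)), (v, vpt j)) := by
        intro v hv
        rw [Sym2.eq_swap]
        exact ihout v hv _ (theta_adj_pp' (by omega))
      have hF : ∀ v, r ≤ G.degree v + 1 → ∀ h'' ∈ ({vpt (k := k) j} : Finset _),
          h'' ≠ vpt (k := k) (j + 1) ∧
          (thetaGraph k l).Adj (vpt (j + 1)) h'' ∧
          Infected (G □ thetaGraph k l) r T s((v, vpt (j + 1)), (v, h'')) := by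
        intro v hv h'' hh''
        rw [Finset.mem_singleton] at hh''
        subst hh''
        exact ⟨fun hh => by have := (vpt_inj (k := k) (by omega) (by omega)).1 hh; omega,
          (theta_adj_pp' (by omega)).symm, hin v hv⟩
      have LD1 : ∀ e ∈ G.edgeSet, Infected (G □ thetaGraph k l) r T
          (Sym2.map (layMap (vpt (j + 1))) e) := by
        refine layer_step (by omega) h₁
          (fun e he => ini (mem_bigSet_p G (by omega) (Finset.mem_coe.1 he))) ?_
        intro v h1 h2
        exact ⟨{vpt j}, by simp; omega, hF v (by omega)⟩
      refine ⟨LD1, fun v hv h' hadj => ?_⟩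
      exact cross_infect (fun e he _ => LD1 e he) {vpt j} (hF v hv) (by simp; omega) hadj
  have hl43 : l - 4 + 1 = l - 3 := by omega
  have hk43 : k - 4 + 1 = k - 3 := by omega
  -- incoming cross to layer p(l-3) from p(l-4)
  have crossPlin : ∀ v, r ≤ G.degree v + 2 →
      Infected (G □ thetaGraph k l) r T s((v, vpt (l - 4)), (v, vpt (l - 3))) := by
    intro v hv
    rcases Nat.lt_or_ge (G.degree v + 1) r with hlt | hge
    · refine ini (mem_bigSet_d2 G (v := v) (by omega) ?_)
      have := mem_fib2_pp (k := k) (l := l) v (j := l - 4) (by omega)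
      rwa [hl43] at this
    · have := (chainP (l - 4) (by omega)).2 v hge (vpt (l - 4 + 1)) (theta_adj_pp' (by omega))
      rwa [hl43] at this
  have hFpl : ∀ v, r ≤ G.degree v + 2 → ∀ h'' ∈ ({vpt (k := k) (l - 4), vb} : Finset _),
      h'' ≠ vpt (k := k) (l - 3) ∧ (thetaGraph k l).Adj (vpt (l - 3)) h'' ∧
      Infected (G □ thetaGraph k l) r T s((v, vpt (l - 3)), (v, h'')) := by
    intro v hv h'' hh''
    rcases Finset.mem_insert.1 hh'' with rfl | hh''
    · refine ⟨fun hh => by have := (vpt_inj (k := k) (i := l - 4) (j := l - 3) (by omega) (by omega)).1 hh; omega, ?_, ?_⟩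
      · have := (theta_adj_pp' (k := k) (l := l) (j := l - 4) (by omega)).symm
        rwa [hl43] at this
      · rw [Sym2.eq_swap]
        exact crossPlin v hv
    · rw [Finset.mem_singleton] at hh''
      subst hh''
      refine ⟨fun hh => vpt_ne_vb hpl hh.symm, theta_adj_pb' hpl, ?_⟩
      rw [Sym2.eq_swap]
      exact crossB v hv _ (theta_adj_pb' hpl).symm
  have cardFpl : ({vpt (k := k) (l - 4), vb} : Finset _).card = 2 :=
    Finset.card_pair (vpt_ne_vb (k := k) (l := l) (j := l - 4) (by omega))
  have LDpl : ∀ e ∈ G.edgeSet, Infected (G □ thetaGraph k l) r T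
      (Sym2.map (layMap (vpt (l - 3))) e) := by
    refine layer_step (by omega) h₂
      (fun e he => ini (mem_bigSet_plast G (Finset.mem_coe.1 he))) ?_
    intro v h1 h2
    exact ⟨{vpt (l - 4), vb}, by rw [cardFpl]; omega, hFpl v (by omega)⟩
  have crossPlout : ∀ v, r ≤ G.degree v + 2 → ∀ h', (thetaGraph k l).Adj (vpt (l - 3)) h' →
      Infected (G □ thetaGraph k l) r T s((v, vpt (l - 3)), (v, h')) := by
    intro v hv h' hadj
    exact cross_infect (fun e he _ => LDpl e he) _ (hFpl v hv) (by rw [cardFpl]; omega) hadj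
  -- q chain
  have chainQ : ∀ j, j + 4 ≤ k →
      (∀ e ∈ G.edgeSet, Infected (G □ thetaGraph k l) r T
        (Sym2.map (layMap (vqt j)) e)) ∧
      (∀ v, r ≤ G.degree v + 1 → ∀ h', (thetaGraph k l).Adj (vqt j) h' →
        Infected (G □ thetaGraph k l) r T s((v, vqt j), (v, h'))) := by
    intro j
    induction j with
    | zero =>
      intro hj4
      have hin : ∀ v, r ≤ G.degree v + 1 →
          Infected (G □ thetaGraph k l) r T s((v, vqt 0), (v, va)) := by
        intro v hv
        rw [Sym2.eq_swap]
        exact crossA v hv _ (theta_adj_aq0' h0k)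
      have hF : ∀ v, r ≤ G.degree v + 1 → ∀ h'' ∈ ({va} : Finset _), h'' ≠ vqt (l := l) 0 ∧
          (thetaGraph k l).Adj (vqt 0) h'' ∧
          Infected (G □ thetaGraph k l) r T s((v, vqt 0), (v, h'')) := by
        intro v hv h'' hh''
        rw [Finset.mem_singleton] at hh''
        subst hh''
        exact ⟨fun hh => vqt_ne_va h0k hh.symm, (theta_adj_aq0' h0k).symm, hin v hv⟩
      have LD0 : ∀ e ∈ G.edgeSet, Infected (G □ thetaGraph k l) r T
          (Sym2.map (layMap (vqt 0)) e) := by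
        refine layer_step (by omega) h₁
          (fun e he => ini (mem_bigSet_q G (by omega) (Finset.mem_coe.1 he))) ?_
        intro v h1 h2
        exact ⟨{va}, by simp; omega, hF v (by omega)⟩
      refine ⟨LD0, fun v hv h' hadj => ?_⟩
      exact cross_infect (fun e he _ => LD0 e he) {va} (hF v hv) (by simp; omega) hadj
    | succ j ih =>
      intro hj4
      obtain ⟨ihLD, ihout⟩ := ih (by omega)
      have hin : ∀ v, r ≤ G.degree v + 1 →
          Infected (G □ thetaGraph k l) r T s((v, vqt (j + 1)), (v, vqt j)) := by
        intro v hv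
        rw [Sym2.eq_swap]
        exact ihout v hv _ (theta_adj_qq' (by omega))
      have hF : ∀ v, r ≤ G.degree v + 1 → ∀ h'' ∈ ({vqt (l := l) j} : Finset _),
          h'' ≠ vqt (l := l) (j + 1) ∧
          (thetaGraph k l).Adj (vqt (j + 1)) h'' ∧
          Infected (G □ thetaGraph k l) r T s((v, vqt (j + 1)), (v, h'')) := by
        intro v hv h'' hh''
        rw [Finset.mem_singleton] at hh''
        subst hh''
        exact ⟨fun hh => by have := (vqt_inj (l := l) (by omega) (by omega)).1 hh; omega,
          (theta_adj_qq' (by omega)).symm, hin v hv⟩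
      have LD1 : ∀ e ∈ G.edgeSet, Infected (G □ thetaGraph k l) r T
          (Sym2.map (layMap (vqt (j + 1))) e) := by
        refine layer_step (by omega) h₁
          (fun e he => ini (mem_bigSet_q G (by omega) (Finset.mem_coe.1 he))) ?_
        intro v h1 h2
        exact ⟨{vqt j}, by simp; omega, hF v (by omega)⟩
      refine ⟨LD1, fun v hv h' hadj => ?_⟩
      exact cross_infect (fun e he _ => LD1 e he) {vqt j} (hF v hv) (by simp; omega) hadj
  -- incoming cross to layer q(k-3) from q(k-4)
  have crossQlin : ∀ v, r ≤ G.degree v + 2 →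
      Infected (G □ thetaGraph k l) r T s((v, vqt (k - 4)), (v, vqt (k - 3))) := by
    intro v hv
    rcases Nat.lt_or_ge (G.degree v + 1) r with hlt | hge
    · refine ini (mem_bigSet_d2 G (v := v) (by omega) ?_)
      have := mem_fib2_qq (k := k) (l := l) v (j := k - 4) (by omega)
      rwa [hk43] at this
    · have := (chainQ (k - 4) (by omega)).2 v hge (vqt (k - 4 + 1)) (theta_adj_qq' (by omega))
      rwa [hk43] at this
  have hFql : ∀ v, r ≤ G.degree v + 2 → ∀ h'' ∈ ({vqt (l := l) (k - 4), vb} : Finset _),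
      h'' ≠ vqt (l := l) (k - 3) ∧ (thetaGraph k l).Adj (vqt (k - 3)) h'' ∧
      Infected (G □ thetaGraph k l) r T s((v, vqt (k - 3)), (v, h'')) := by
    intro v hv h'' hh''
    rcases Finset.mem_insert.1 hh'' with rfl | hh''
    · refine ⟨fun hh => by have := (vqt_inj (l := l) (i := k - 4) (j := k - 3) (by omega) (by omega)).1 hh; omega, ?_, ?_⟩
      · have := (theta_adj_qq' (k := k) (l := l) (j := k - 4) (by omega)).symm
        rwa [hk43] at this
      · rw [Sym2.eq_swap]
        exact crossQlin v hv
    · rw [Finset.mem_singleton] at hh''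
      subst hh''
      refine ⟨fun hh => vqt_ne_vb hqk hh.symm, theta_adj_qb' hqk, ?_⟩
      rw [Sym2.eq_swap]
      exact crossB v hv _ (theta_adj_qb' hqk).symm
  have cardFql : ({vqt (l := l) (k - 4), vb} : Finset _).card = 2 :=
    Finset.card_pair (vqt_ne_vb (k := k) (l := l) (j := k - 4) (by omega))
  have LDql : ∀ e ∈ G.edgeSet, Infected (G □ thetaGraph k l) r T
      (Sym2.map (layMap (vqt (k - 3))) e) := by
    refine layer_step (by omega) h₂
      (fun e he => ini (mem_bigSet_qlast G (Finset.mem_coe.1 he))) ?_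
    intro v h1 h2
    exact ⟨{vqt (k - 4), vb}, by rw [cardFql]; omega, hFql v (by omega)⟩
  have crossQlout : ∀ v, r ≤ G.degree v + 2 → ∀ h', (thetaGraph k l).Adj (vqt (k - 3)) h' →
      Infected (G □ thetaGraph k l) r T s((v, vqt (k - 3)), (v, h')) := by
    intro v hv h' hadj
    exact cross_infect (fun e he _ => LDql e he) _ (hFql v hv) (by rw [cardFql]; omega) hadj
  -- every layer is fully infected
  have LDall : ∀ h : Fin 2 ⊕ Fin (l - 2) ⊕ Fin (k - 2), ∀ e ∈ G.edgeSet,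
      Infected (G □ thetaGraph k l) r T (Sym2.map (layMap h) e) := by
    intro h
    rcases h with i | j | j
    · have : i = 0 ∨ i = 1 := by omega
      rcases this with rfl | rfl
      · exact LDa
      · exact LDb
    · have hv : vpt (k := k) j.1 = Sum.inr (Sum.inl j) := by
        rw [vpt_eq j.2]; simp [vp]
      rcases Nat.lt_or_ge j.1 (l - 3) with hj | hj
      · have := (chainP j.1 (by omega)).1
        rwa [hv] at this
      · have hj3 : j.1 = l - 3 := by have := j.2; omega
        have := LDpl
        rw [← hj3, hv] at this
        exact this
    · have hv : vqt (l := l) j.1 = Sum.inr (Sum.inr j) := by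
        rw [vqt_eq j.2]; simp [vq]
      rcases Nat.lt_or_ge j.1 (k - 3) with hj | hj
      · have := (chainQ j.1 (by omega)).1
        rwa [hv] at this
      · have hj3 : j.1 = k - 3 := by have := j.2; omega
        have := LDql
        rw [← hj3, hv] at this
        exact this
  -- handler for cross edges, by shape and degree class
  have handler : ∀ (v : V) (x y : Fin 2 ⊕ Fin (l - 2) ⊕ Fin (k - 2)), EdgeShape k l x y →
      Infected (G □ thetaGraph k l) r T s((v, x), (v, y)) := by
    intro v x y hs
    rcases hs with ⟨rfl, rfl⟩ | ⟨h0, rfl, rfl⟩ | ⟨j, hj, hj1, rfl, rfl⟩ | ⟨h3, rfl, rfl⟩ |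
      ⟨h0, rfl, rfl⟩ | ⟨j, hj, hj1, rfl, rfl⟩ | ⟨h3, rfl, rfl⟩
    · -- a-b
      by_cases hd1 : r ≤ G.degree v + 1
      · exact crossA v hd1 vb theta_adj_ab
      by_cases hd2 : r ≤ G.degree v + 2
      · exact ini (mem_bigSet_d2 G (by omega) (mem_fib2_ab v))
      · exact ini (mem_bigSet_d3 G (by omega) (fib2_subset_fib3 v (mem_fib2_ab v)))
    · -- a-p0
      rw [← vpt_eq h0]
      by_cases hd1 : r ≤ G.degree v + 1
      · exact crossA v hd1 _ (theta_adj_ap0' h0)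
      by_cases hd2 : r ≤ G.degree v + 2
      · refine cross_infect (fun e he _ => LDa e he) {vb, vqt 0} ?_ ?_ (theta_adj_ap0' h0)
        · intro h'' hh''
          rcases Finset.mem_insert.1 hh'' with rfl | hh''
          · exact ⟨fun hh => va_ne_vb hh.symm, theta_adj_ab,
              ini (mem_bigSet_d2 G (by omega) (mem_fib2_ab v))⟩
          · rw [Finset.mem_singleton] at hh''
            subst hh''
            exact ⟨fun hh => vqt_ne_va h0k hh, theta_adj_aq0' h0k,
              ini (mem_bigSet_d2 G (by omega) (mem_fib2_aq0 v))⟩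
        · rw [Finset.card_pair (vqt_ne_vb h0k).symm]
          omega
      · exact ini (mem_bigSet_d3 G (by omega) (mem_fib3_ap0 v))
    · -- p_j - p_{j+1}
      rw [← vpt_eq hj, ← vpt_eq hj1]
      by_cases hd1 : r ≤ G.degree v + 1
      · exact (chainP j (by omega)).2 v hd1 _ (theta_adj_pp' hj1)
      by_cases hd2 : r ≤ G.degree v + 2
      · exact ini (mem_bigSet_d2 G (by omega) (mem_fib2_pp v (by omega)))
      · exact ini (mem_bigSet_d3 G (by omega) (fib2_subset_fib3 v (mem_fib2_pp v (by omega))))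
    · -- p_{l-3} - b
      rw [← vpt_eq h3]
      by_cases hd2 : r ≤ G.degree v + 2
      · rw [Sym2.eq_swap]
        exact crossB v hd2 _ (theta_adj_pb' h3).symm
      · rw [Sym2.eq_swap]
        exact ini (mem_bigSet_d3 G (by omega) (mem_fib3_bplast v))
    · -- a-q0
      rw [← vqt_eq h0]
      by_cases hd1 : r ≤ G.degree v + 1
      · exact crossA v hd1 _ (theta_adj_aq0' h0)
      by_cases hd2 : r ≤ G.degree v + 2
      · exact ini (mem_bigSet_d2 G (by omega) (mem_fib2_aq0 v))
      · exact ini (mem_bigSet_d3 G (by omega) (fib2_subset_fib3 v (mem_fib2_aq0 v)))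
    · -- q_j - q_{j+1}
      rw [← vqt_eq hj, ← vqt_eq hj1]
      by_cases hd1 : r ≤ G.degree v + 1
      · exact (chainQ j (by omega)).2 v hd1 _ (theta_adj_qq' hj1)
      by_cases hd2 : r ≤ G.degree v + 2
      · exact ini (mem_bigSet_d2 G (by omega) (mem_fib2_qq v (by omega)))
      · exact ini (mem_bigSet_d3 G (by omega) (fib2_subset_fib3 v (mem_fib2_qq v (by omega))))
    · -- q_{k-3} - b
      rw [← vqt_eq h3]
      by_cases hd2 : r ≤ G.degree v + 2
      · rw [Sym2.eq_swap]
        exact crossB v hd2 _ (theta_adj_qb' h3).symm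
      · rw [Sym2.eq_swap]
        exact ini (mem_bigSet_d3 G (by omega)
          (fib2_subset_fib3 v (mem_fib2_bqlast v)))
  constructor
  · -- the initial set consists of edges
    intro f hf
    rw [Finset.mem_coe] at hf
    simp only [bigSet, Finset.mem_union, Finset.mem_image, Finset.mem_biUnion,
      Finset.mem_filter, Finset.mem_range] at hf
    rcases hf with ((((((((⟨e, he, rfl⟩ | ⟨e, he, rfl⟩) | ⟨j, hj, e, he, rfl⟩) |
      ⟨j, hj, e, he, rfl⟩) | ⟨e, he, rfl⟩) | ⟨e, he, rfl⟩) | ⟨v, hv, rfl⟩) |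
      ⟨v, hv, hf⟩) | ⟨v, hv, hf⟩)
    · exact mapEdge_mem (fun _ _ => layMap_adj) (h₀.1 (Finset.mem_coe.2 he))
    · exact mapEdge_mem (fun _ _ => layMap_adj) (h₁.1 (Finset.mem_coe.2 he))
    · exact mapEdge_mem (fun _ _ => layMap_adj) (h₁.1 (Finset.mem_coe.2 he))
    · exact mapEdge_mem (fun _ _ => layMap_adj) (h₁.1 (Finset.mem_coe.2 he))
    · exact mapEdge_mem (fun _ _ => layMap_adj) (h₂.1 (Finset.mem_coe.2 he))
    · exact mapEdge_mem (fun _ _ => layMap_adj) (h₂.1 (Finset.mem_coe.2 he))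
    · exact cross_mem_edgeSet theta_adj_ab
    · exact fib2_subset_edgeSet (G := G) hl hkl v f hf
    · exact fib3_subset_edgeSet (G := G) hl hkl v f hf
  · -- every edge becomes infected
    intro e he
    induction e with
    | _ x y =>
      rw [SimpleGraph.mem_edgeSet] at he
      rcases SimpleGraph.boxProd_adj.1 he with ⟨hG, heq⟩ | ⟨hH, heq⟩
      · obtain ⟨x1, h⟩ := x
        obtain ⟨y1, h'⟩ := y
        simp only at heq
        subst heq
        have := LDall h s(x1, y1) ((SimpleGraph.mem_edgeSet _).2 hG)
        simpa using this
      · obtain ⟨x1, h⟩ := x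
        obtain ⟨y1, h'⟩ := y
        simp only at heq
        subst heq
        rcases theta_adj_elim hl hkl hH with hs | hs
        · exact handler x1 h h' hs
        · rw [Sym2.eq_swap]
          exact handler x1 h' h hs

end Percolation


section Counting

set_option linter.unusedSectionVars false

variable {V : Type*} [Fintype V] {G : SimpleGraph V} {k l r : ℕ}
variable {A₀ A₁ A₂ : Finset (Sym2 V)}

theorem fib2_card_le (hl : 4 ≤ l) (hkl : l ≤ k) (v : V) :
    (fib2 k l v).card ≤ k + l - 3 := by
  have h3 : ({s((v, va), (v, vb)), s((v, va), (v, vqt 0)),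
      s((v, vb), (v, vqt (k - 3)))} : Finset (Sym2 (V × (Fin 2 ⊕ Fin (l-2) ⊕ Fin (k-2))))).card
      ≤ 3 :=
    le_trans (Finset.card_insert_le _ _) (Nat.succ_le_succ
      (le_trans (Finset.card_insert_le _ _) (Nat.succ_le_succ
        (le_of_eq (Finset.card_singleton _)))))
  have hp : ((Finset.range (l - 3)).image
      (fun j => s(((v : V), vpt (k := k) (l := l) j), (v, vpt (j + 1))))).card ≤ l - 3 :=
    le_trans Finset.card_image_le (le_of_eq (Finset.card_range _))
  have hq : ((Finset.range (k - 3)).image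
      (fun j => s(((v : V), vqt (k := k) (l := l) j), (v, vqt (j + 1))))).card ≤ k - 3 :=
    le_trans Finset.card_image_le (le_of_eq (Finset.card_range _))
  refine le_trans (Finset.card_union_le _ _) (le_trans
    (add_le_add (le_trans (Finset.card_union_le _ _) (add_le_add h3 hp)) hq) ?_)
  omega

theorem fib3_card_le (hl : 4 ≤ l) (hkl : l ≤ k) (v : V) :
    (fib3 k l v).card ≤ k + l - 1 := by
  refine le_trans (Finset.card_union_le _ _) (le_trans
    (add_le_add (fib2_card_le hl hkl v) (le_trans (Finset.card_insert_le _ _)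
      (Nat.succ_le_succ (le_of_eq (Finset.card_singleton _))))) ?_)
  omega

theorem bigSet_card_le (hl : 4 ≤ l) (hkl : l ≤ k) :
    (bigSet k l G r A₀ A₁ A₂).card ≤
      A₀.card + (k + l - 5) * A₁.card + 2 * A₂.card
      + (Finset.univ.filter (fun v => G.degree v + 1 = r)).card
      + (k + l - 3) * (Finset.univ.filter (fun v => G.degree v + 2 = r)).card
      + (k + l - 1) * (Finset.univ.filter (fun v : V => G.degree v + 3 ≤ r)).card := by
  classical
  have h1p : ((Finset.range (l - 3)).biUnion
      (fun j => A₁.image (Sym2.map (layMap (vpt (k := k) (l := l) j))))).card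
      ≤ (l - 3) * A₁.card :=
    le_trans Finset.card_biUnion_le (le_trans
      (Finset.sum_le_sum (fun i _ => Finset.card_image_le))
      (by simp [Finset.sum_const, Finset.card_range]))
  have h1q : ((Finset.range (k - 3)).biUnion
      (fun j => A₁.image (Sym2.map (layMap (vqt (k := k) (l := l) j))))).card
      ≤ (k - 3) * A₁.card :=
    le_trans Finset.card_biUnion_le (le_trans
      (Finset.sum_le_sum (fun i _ => Finset.card_image_le))
      (by simp [Finset.sum_const, Finset.card_range]))
  have hd2 : ((Finset.univ.filter (fun v => G.degree v + 2 = r)).biUnion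
      (fun v => fib2 k l v)).card
      ≤ (k + l - 3) * (Finset.univ.filter (fun v => G.degree v + 2 = r)).card :=
    le_trans Finset.card_biUnion_le (le_trans
      (Finset.sum_le_sum (fun v _ => fib2_card_le hl hkl v))
      (by simp [Finset.sum_const, mul_comm]))
  have hd3 : ((Finset.univ.filter (fun v => G.degree v + 3 ≤ r)).biUnion
      (fun v => fib3 k l v)).card
      ≤ (k + l - 1) * (Finset.univ.filter (fun v : V => G.degree v + 3 ≤ r)).card :=
    le_trans Finset.card_biUnion_le (le_trans
      (Finset.sum_le_sum (fun v _ => fib3_card_le hl hkl v))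
      (by simp [Finset.sum_const, mul_comm]))
  refine le_trans (le_trans (Finset.card_union_le _ _) (add_le_add
    (le_trans (Finset.card_union_le _ _) (add_le_add
      (le_trans (Finset.card_union_le _ _) (add_le_add
        (le_trans (Finset.card_union_le _ _) (add_le_add
          (le_trans (Finset.card_union_le _ _) (add_le_add
            (le_trans (Finset.card_union_le _ _) (add_le_add
              (le_trans (Finset.card_union_le _ _) (add_le_add
                (le_trans (Finset.card_union_le _ _) (add_le_add
                  (Finset.card_image_le) (Finset.card_image_le)))
                h1p))
              h1q))
            (Finset.card_image_le)))
          (Finset.card_image_le)))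
        (Finset.card_image_le)))
      hd2))
    hd3)) ?_
  have hkey : k + l - 5 = 1 + (l - 3) + (k - 3) := by omega
  refine le_of_eq ?_
  rw [hkey]
  ring

end Counting

/-- Upper bound on `m_e(G □ H_{k,ℓ}, r)` for the theta graph `H_{k,ℓ}`, `k ≥ ℓ ≥ 4`. -/
theorem theta_upper {V : Type*} [Fintype V] (G : SimpleGraph V) (r k l : ℕ)
    (hr : 1 < r) (hl : 4 ≤ l) (hkl : l ≤ k) :
    me (G □ thetaGraph k l) r ≤
      me G r + (k + l - 5) * me G (r - 1) + 2 * me G (r - 2) +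
      dcount G ((r : ℤ) - 1) + (k + l - 3) * dcount G ((r : ℤ) - 2) +
      (k + l - 1) * ∑ t ∈ Finset.range (r - 2), dcount G (t : ℤ) := by
  classical
  have hne : ∀ r' : ℕ,
      {n | ∃ S : Set (Sym2 V), S.Finite ∧ Percolates G r' S ∧ S.ncard = n}.Nonempty :=
    fun r' => ⟨G.edgeSet.ncard, G.edgeSet, Set.toFinite _,
      ⟨subset_rfl, fun e he => .init he⟩, rfl⟩
  obtain ⟨B₀, hB₀f, hB₀p, hB₀c⟩ :
      ∃ S : Set (Sym2 V), S.Finite ∧ Percolates G r S ∧ S.ncard = me G r :=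
    Nat.sInf_mem (hne r)
  obtain ⟨B₁, hB₁f, hB₁p, hB₁c⟩ :
      ∃ S : Set (Sym2 V), S.Finite ∧ Percolates G (r - 1) S ∧ S.ncard = me G (r - 1) :=
    Nat.sInf_mem (hne (r - 1))
  obtain ⟨B₂, hB₂f, hB₂p, hB₂c⟩ :
      ∃ S : Set (Sym2 V), S.Finite ∧ Percolates G (r - 2) S ∧ S.ncard = me G (r - 2) :=
    Nat.sInf_mem (hne (r - 2))
  have hA₀p : Percolates G r ↑hB₀f.toFinset := by rwa [Set.Finite.coe_toFinset]
  have hA₁p : Percolates G (r - 1) ↑hB₁f.toFinset := by rwa [Set.Finite.coe_toFinset]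
  have hA₂p : Percolates G (r - 2) ↑hB₂f.toFinset := by rwa [Set.Finite.coe_toFinset]
  have hA₀c : hB₀f.toFinset.card = me G r := by
    rw [← Set.ncard_coe_finset, Set.Finite.coe_toFinset]; exact hB₀c
  have hA₁c : hB₁f.toFinset.card = me G (r - 1) := by
    rw [← Set.ncard_coe_finset, Set.Finite.coe_toFinset]; exact hB₁c
  have hA₂c : hB₂f.toFinset.card = me G (r - 2) := by
    rw [← Set.ncard_coe_finset, Set.Finite.coe_toFinset]; exact hB₂c
  have hperc := bigSet_percolates hr hl hkl hA₀p hA₁p hA₂p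
  have hme : me (G □ thetaGraph k l) r ≤
      (bigSet k l G r hB₀f.toFinset hB₁f.toFinset hB₂f.toFinset).card :=
    Nat.sInf_le ⟨↑(bigSet k l G r hB₀f.toFinset hB₁f.toFinset hB₂f.toFinset),
      Finset.finite_toSet _, hperc, Set.ncard_coe_finset _⟩
  refine le_trans hme (le_trans (bigSet_card_le hl hkl) ?_)
  rw [hA₀c, hA₁c, hA₂c]
  have hd : ∀ i : ℤ, dcount G i =
      (Finset.univ.filter (fun v => (G.degree v : ℤ) = i)).card := by
    intro i
    rw [dcount, Nat.card_eq_fintype_card, Fintype.card_subtype]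
  have hf1 : (Finset.univ.filter (fun v => G.degree v + 1 = r)).card =
      dcount G ((r : ℤ) - 1) := by
    rw [hd]
    congr 1
    ext v
    simp only [Finset.mem_filter, Finset.mem_univ, true_and]
    omega
  have hf2 : (Finset.univ.filter (fun v => G.degree v + 2 = r)).card =
      dcount G ((r : ℤ) - 2) := by
    rw [hd]
    congr 1
    ext v
    simp only [Finset.mem_filter, Finset.mem_univ, true_and]
    omega
  have hf3 : (Finset.univ.filter (fun v : V => G.degree v + 3 ≤ r)).card =
      ∑ t ∈ Finset.range (r - 2), dcount G (t : ℤ) := by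
    rw [Finset.card_eq_sum_card_fiberwise
      (f := fun v => G.degree v) (t := Finset.range (r - 2))
      (fun v hv => Finset.mem_range.2 (by
        have h1 : G.degree v + 3 ≤ r := by simpa using (Finset.mem_filter.1 hv).2
        show G.degree v < r - 2
        omega))]
    refine Finset.sum_congr rfl (fun t ht => ?_)
    rw [hd]
    congr 1
    ext v
    simp only [Finset.mem_filter, Finset.mem_univ, true_and, Finset.mem_range] at ht ⊢
    beta_reduce at ht ⊢
    omega
  rw [hf1, hf2, hf3]

end BondPerc
end

section
/- If δ(G) ≥ r, then m_e(G□S_k, r) ≤ m_e(G,r) + k·m_e(G,r−1): the union of an optimal r-percolating set on the central copy of G and optimal (r−1)-percolating sets on each of the k leaf copies of G percolates in G□S_k. -/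
open Polynomial

namespace BondPerc

open Classical

set_option maxHeartbeats 1000000

lemma starGraph_adj {k : ℕ} {i j : Fin (k + 1)} :
    (starGraph k).Adj i j ↔ i ≠ j ∧ (i = 0 ∨ j = 0) := by
  simp [starGraph, SimpleGraph.fromRel_adj]

lemma map_edge_mem {V : Type*} {G : SimpleGraph V} {k : ℕ} (i : Fin (k + 1)) {e : Sym2 V}
    (he : e ∈ G.edgeSet) :
    Sym2.map (fun v => (v, i)) e ∈ (G □ starGraph k).edgeSet := by
  induction e using Sym2.ind with
  | _ a b =>
    rw [Sym2.map_pair_eq, SimpleGraph.mem_edgeSet, SimpleGraph.boxProd_adj]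
    exact Or.inl ⟨he, rfl⟩

lemma ncard_iUnion_fin_le {α : Type*} : ∀ (n : ℕ) (f : Fin n → Set α),
    (⋃ i, f i).ncard ≤ ∑ i, (f i).ncard := by
  intro n
  induction n with
  | zero => intro f; simp
  | succ n ih =>
    intro f
    have h1 : (⋃ i, f i) = f 0 ∪ ⋃ i : Fin n, f i.succ := by
      ext x; simp only [Set.mem_iUnion, Set.mem_union, Fin.exists_fin_succ]
    rw [h1, Fin.sum_univ_succ]
    exact (Set.ncard_union_le _ _).trans (Nat.add_le_add_left (ih _) _)

lemma copy_infected {V : Type*} {G : SimpleGraph V} {r k : ℕ}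
    {U : Set (Sym2 (V × Fin (k + 1)))} {i : Fin (k + 1)} {r' : ℕ} {S : Set (Sym2 V)}
    (hinit : ∀ e ∈ S, Infected (G □ starGraph k) r U (Sym2.map (fun v => (v, i)) e))
    (hboost : ∀ v : V, ∃ T0 : Finset (Sym2 (V × Fin (k + 1))), r ≤ r' + T0.card ∧
      ∀ f ∈ T0, f ∈ (G □ starGraph k).edgeSet ∧ ((v, i) : V × Fin (k + 1)) ∈ f ∧
        Infected (G □ starGraph k) r U f ∧
        ∀ g : Sym2 V, f ≠ Sym2.map (fun v => (v, i)) g)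
    {e : Sym2 V} (he : Infected G r' S e) :
    Infected (G □ starGraph k) r U (Sym2.map (fun v => (v, i)) e) := by
  have hinj : Function.Injective (fun v : V => (v, i)) := fun a b h => congrArg Prod.fst h
  induction he with
  | init h => exact hinit _ h
  | step he v hv T hT hT1 hT2 hT3 ih =>
    obtain ⟨T0, hcard, hT0⟩ := hboost v
    have hdisj : Disjoint (T.image (Sym2.map (fun v => (v, i)))) T0 := by
      rw [Finset.disjoint_left]
      rintro f hf hf0
      obtain ⟨g, hg, rfl⟩ := Finset.mem_image.1 hf
      exact (hT0 _ hf0).2.2.2 g rfl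
    refine Infected.step (map_edge_mem i he) (v, i) (Sym2.mem_map.2 ⟨v, hv, rfl⟩)
      (T.image (Sym2.map (fun v => (v, i))) ∪ T0) ?_ ?_ ?_ ?_
    · rw [Finset.card_union_of_disjoint hdisj,
        Finset.card_image_of_injective _ (Sym2.map.injective hinj)]
      exact hcard.trans (Nat.add_le_add_right hT _)
    · intro f hf
      rcases Finset.mem_union.1 hf with hf | hf
      · obtain ⟨g, hg, rfl⟩ := Finset.mem_image.1 hf
        exact map_edge_mem i (hT1 g hg)
      · exact (hT0 _ hf).1
    · intro f hf
      rcases Finset.mem_union.1 hf with hf | hf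
      · obtain ⟨g, hg, rfl⟩ := Finset.mem_image.1 hf
        exact Sym2.mem_map.2 ⟨v, hT2 g hg, rfl⟩
      · exact (hT0 _ hf).2.1
    · intro f hf
      rcases Finset.mem_union.1 hf with hf | hf
      · obtain ⟨g, hg, rfl⟩ := Finset.mem_image.1 hf
        exact ih g hg
      · exact (hT0 _ hf).2.2.1

/-- If `δ(G) ≥ r`, the union of an optimal `r`-percolating set on the central copy and
optimal `(r-1)`-percolating sets on the leaf copies percolates in `G □ S_k`, whence
`m_e(G □ S_k, r) ≤ m_e(G, r) + k·m_e(G, r-1)`. -/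
theorem star_union_percolates {V : Type*} [Fintype V] (G : SimpleGraph V) (r k : ℕ)
    (hr : 1 ≤ r) (hk : 1 ≤ k) (hdel : r ≤ G.minDegree)
    (F : Fin (k + 1) → Set (Sym2 V))
    (h0 : Percolates G r (F 0)) (h0fin : (F 0).Finite) (h0card : (F 0).ncard = me G r)
    (hi : ∀ i : Fin (k + 1), i ≠ 0 →
      Percolates G (r - 1) (F i) ∧ (F i).Finite ∧ (F i).ncard = me G (r - 1)) :
    Percolates (G □ starGraph k) r (⋃ i, Sym2.map (fun v => (v, i)) '' F i) ∧
      me (G □ starGraph k) r ≤ me G r + k * me G (r - 1) := by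
  set U := ⋃ i, Sym2.map (fun v => (v, i)) '' F i with hUdef
  have hinj : ∀ i : Fin (k + 1), Function.Injective (fun v : V => (v, i)) :=
    fun i a b h => congrArg Prod.fst h
  have hFsub : ∀ i : Fin (k + 1), F i ⊆ G.edgeSet := by
    intro i
    by_cases h : i = 0
    · rw [h]; exact h0.1
    · exact (hi i h).1.1
  have hdeg : ∀ v : V, r ≤ G.degree v := fun v => hdel.trans (G.minDegree_le_degree v)
  have hUsub : U ⊆ (G □ starGraph k).edgeSet := by
    rintro e he
    simp only [hUdef, Set.mem_iUnion, Set.mem_image] at he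
    obtain ⟨i, f, hf, rfl⟩ := he
    exact map_edge_mem i (hFsub i hf)
  have hinit : ∀ i : Fin (k + 1), ∀ e ∈ F i,
      Infected (G □ starGraph k) r U (Sym2.map (fun v => (v, i)) e) :=
    fun i e he => Infected.init (Set.mem_iUnion.2 ⟨i, Set.mem_image_of_mem _ he⟩)
  -- the central copy gets fully infected
  have hcopy0 : ∀ e ∈ G.edgeSet,
      Infected (G □ starGraph k) r U (Sym2.map (fun v => (v, (0 : Fin (k + 1)))) e) := by
    intro e he
    exact copy_infected (hinit 0) (fun v => ⟨∅, by simp, by simp⟩) (h0.2 e he)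
  -- the star edges get infected
  have hstar : ∀ (v : V) (i : Fin (k + 1)), i ≠ 0 →
      Infected (G □ starGraph k) r U s((v, (0 : Fin (k + 1))), (v, i)) := by
    intro v i hi0
    have hadj : (G □ starGraph k).Adj (v, 0) (v, i) := by
      rw [SimpleGraph.boxProd_adj]
      exact Or.inr ⟨starGraph_adj.2 ⟨fun h => hi0 h.symm, Or.inl rfl⟩, rfl⟩
    refine Infected.step ((SimpleGraph.mem_edgeSet _).2 hadj) (v, 0) (Sym2.mem_mk_left _ _)
      ((G.incidenceFinset v).image (Sym2.map (fun u => (u, (0 : Fin (k + 1)))))) ?_ ?_ ?_ ?_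
    · rw [Finset.card_image_of_injective _ (Sym2.map.injective (hinj 0)),
        G.card_incidenceFinset_eq_degree]
      exact hdeg v
    · rintro f hf
      obtain ⟨g, hg, rfl⟩ := Finset.mem_image.1 hf
      exact map_edge_mem 0 (Set.mem_toFinset.1 hg).1
    · rintro f hf
      obtain ⟨g, hg, rfl⟩ := Finset.mem_image.1 hf
      exact Sym2.mem_map.2 ⟨v, (Set.mem_toFinset.1 hg).2, rfl⟩
    · rintro f hf
      obtain ⟨g, hg, rfl⟩ := Finset.mem_image.1 hf
      exact hcopy0 g (Set.mem_toFinset.1 hg).1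
  -- the leaf copies get fully infected
  have hcopyi : ∀ (i : Fin (k + 1)), i ≠ 0 → ∀ e ∈ G.edgeSet,
      Infected (G □ starGraph k) r U (Sym2.map (fun v => (v, i)) e) := by
    intro i hi0 e he
    refine copy_infected (hinit i) ?_ ((hi i hi0).1.2 e he)
    intro v
    refine ⟨{s((v, (0 : Fin (k + 1))), (v, i))}, by rw [Finset.card_singleton]; omega, ?_⟩
    intro f hf
    rw [Finset.mem_singleton] at hf
    subst hf
    have hadj : (G □ starGraph k).Adj (v, 0) (v, i) := by
      rw [SimpleGraph.boxProd_adj]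
      exact Or.inr ⟨starGraph_adj.2 ⟨fun h => hi0 h.symm, Or.inl rfl⟩, rfl⟩
    refine ⟨(SimpleGraph.mem_edgeSet _).2 hadj, Sym2.mem_mk_right _ _, hstar v i hi0, ?_⟩
    intro g hEq
    have hmem : ((v, (0 : Fin (k + 1))) : V × Fin (k + 1)) ∈ Sym2.map (fun u => (u, i)) g := by
      rw [← hEq]; exact Sym2.mem_mk_left _ _
    obtain ⟨a, -, ha⟩ := Sym2.mem_map.1 hmem
    exact hi0 (congrArg Prod.snd ha)
  have hperc : Percolates (G □ starGraph k) r U := by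
    refine ⟨hUsub, ?_⟩
    intro e he
    induction e using Sym2.ind with
    | _ x y =>
      rw [SimpleGraph.mem_edgeSet, SimpleGraph.boxProd_adj] at he
      obtain ⟨x1, i⟩ := x
      obtain ⟨y1, j⟩ := y
      rcases he with ⟨hadj, h2⟩ | ⟨hadj, h1⟩
      · dsimp at hadj h2
        subst h2
        rw [show s(((x1 : V), i), (y1, i)) = Sym2.map (fun v => (v, i)) s(x1, y1) by
          rw [Sym2.map_pair_eq]]
        by_cases h : i = 0
        · subst h; exact hcopy0 _ hadj
        · exact hcopyi i h _ hadj
      · dsimp at hadj h1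
        subst h1
        rw [starGraph_adj] at hadj
        obtain ⟨hne, h0' | h0'⟩ := hadj
        · subst h0'
          exact hstar x1 j (fun h => hne h.symm)
        · subst h0'
          rw [Sym2.eq_swap]
          exact hstar x1 i hne
  refine ⟨hperc, ?_⟩
  have hFfin : ∀ i : Fin (k + 1), (F i).Finite := by
    intro i
    by_cases h : i = 0
    · rw [h]; exact h0fin
    · exact (hi i h).2.1
  have hfin : U.Finite := Set.finite_iUnion fun i => (hFfin i).image _
  have hle : U.ncard ≤ me G r + k * me G (r - 1) := by
    calc U.ncard ≤ ∑ i : Fin (k + 1), (Sym2.map (fun v => (v, i)) '' F i).ncard :=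
          ncard_iUnion_fin_le _ _
      _ = ∑ i : Fin (k + 1), (F i).ncard :=
          Finset.sum_congr rfl fun i _ =>
            Set.ncard_image_of_injective _ (Sym2.map.injective (hinj i))
      _ = me G r + k * me G (r - 1) := by
          rw [Fin.sum_univ_succ, h0card,
            Finset.sum_congr rfl fun (i : Fin k) _ => (hi i.succ (Fin.succ_ne_zero i)).2.2]
          simp [Finset.sum_const, mul_comm]
  exact le_trans (Nat.sInf_le ⟨U, hfin, hperc, rfl⟩) hle

end BondPerc
end
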